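/- arXiv:2406.10473 — 5 statements merged into one kernel-verified Lean document; each statement's English description precedes it below -/
import Mathlib

section
/- In a completely randomized two-arm experiment with n units, n_a assigned to arm A and n_b = n − n_a to arm B, with potential outcome pairs (a_i, b_i), the covariance of the two observed arm means is Cov(ā_obs, b̄_obs) = −(1/(n − 1)) σ_ab, where σ_ab = (1/n)∑_i (a_i − ā)(b_i − b̄). -/
open Finset


lemma nat_id (n na nb : ℕ) (h1 : 1 ≤ na) (h2 : na + nb = n) (h3 : 1 ≤ nb) :
    (n-2).choose (na-1) * (n * (n-1)) = n.choose na * (na * nb) := by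
  obtain ⟨a, rfl⟩ : ∃ a, na = a + 1 := ⟨na - 1, by omega⟩
  obtain ⟨c, rfl⟩ : ∃ c, nb = c + 1 := ⟨nb - 1, by omega⟩
  subst h2


  have hA : (a + c + 2) * (a + c + 1).choose a = (a + c + 2).choose (a+1) * (a+1) := by
    simpa using Nat.add_one_mul_choose_eq (a + c + 1) a
  have hB : (a + c + 1) * (a + c).choose c = (a + c + 1).choose (c+1) * (c+1) := by
    simpa using Nat.add_one_mul_choose_eq (a + c) c
  have hC : (a + c).choose c = (a + c).choose a := by
    have := Nat.choose_symm (n := a + c) (k := a) (by omega)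
    simpa [Nat.add_sub_cancel_left, show a + c - a = c by omega] using this
  have hD : (a + c + 1).choose (c+1) = (a + c + 1).choose a := by
    have := Nat.choose_symm (n := a + c + 1) (k := a) (by omega)
    simpa [show a + c + 1 - a = c + 1 by omega] using this
  have hn2 : (a + 1) + (c + 1) - 2 = a + c := by omega
  have hn1 : (a + 1) + (c + 1) - 1 = a + c + 1 := by omega
  have hn0 : (a + 1) + (c + 1) = a + c + 2 := by omega
  rw [hn2, hn1, hn0, Nat.add_sub_cancel]
  -- goal: (a+c).choose a * ((a+c+2) * (a+c+1)) = (a+c+2).choose (a+1) * ((a+1)*(c+1))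
  rw [hC] at hB
  rw [hD] at hB
  calc (a+c).choose a * ((a+c+2) * (a+c+1))
      = (a+c+2) * ((a + c + 1) * (a + c).choose a) := by ring
    _ = (a+c+2) * ((a + c + 1).choose a * (c+1)) := by rw [hB]
    _ = ((a + c + 2) * (a + c + 1).choose a) * (c+1) := by ring
    _ = ((a + c + 2).choose (a+1) * (a+1)) * (c+1) := by rw [hA]
    _ = (a+c+2).choose (a+1) * ((a+1)*(c+1)) := by ring


lemma card_filt (n na : ℕ) (hna : 1 ≤ na) (i j : Fin n) (hij : i ≠ j) :
    ((Finset.powersetCard na (Finset.univ : Finset (Fin n))).filter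
      (fun S => i ∈ S ∧ j ∉ S)).card = (n-2).choose (na-1) := by
  have hcard : (((Finset.univ : Finset (Fin n)).erase i).erase j).card = n - 2 := by
    rw [Finset.card_erase_of_mem, Finset.card_erase_of_mem] <;>
      simp [Finset.mem_erase, hij.symm]
    omega
  rw [show (n-2).choose (na-1) = (Finset.powersetCard (na-1) (((Finset.univ : Finset (Fin n)).erase i).erase j)).card by rw [Finset.card_powersetCard, hcard]]
  · refine Finset.card_bij' (fun S _ => S.erase i) (fun T _ => insert i T) ?hi ?hj ?li ?ri
    case hi =>
      intro S hS
      simp only [Finset.mem_filter, Finset.mem_powersetCard] at hS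
      obtain ⟨⟨_, hScard⟩, hiS, hjS⟩ := hS
      rw [Finset.mem_powersetCard]
      constructor
      · intro x hx
        simp only [Finset.mem_erase] at hx ⊢
        exact ⟨fun h => hjS (h ▸ hx.2), hx.1, Finset.mem_univ x⟩
      · rw [Finset.card_erase_of_mem hiS, hScard]
    case hj =>
      intro T hT
      rw [Finset.mem_powersetCard] at hT
      obtain ⟨hTsub, hTcard⟩ := hT
      have hiT : i ∉ T := fun h => by simpa using (hTsub h)
      have hjT : j ∉ T := fun h => by
        have := hTsub h; simp [Finset.mem_erase] at this
      simp only [Finset.mem_filter, Finset.mem_powersetCard]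
      refine ⟨⟨Finset.subset_univ _, ?_⟩, Finset.mem_insert_self i T, ?_⟩
      · rw [Finset.card_insert_of_notMem hiT, hTcard]; omega
      · simp [Finset.mem_insert, hij.symm, hjT]
    case li =>
      intro S hS
      simp only [Finset.mem_filter] at hS
      exact Finset.insert_erase hS.2.1
    case ri =>
      intro T hT
      rw [Finset.mem_powersetCard] at hT
      have hiT : i ∉ T := fun h => by simpa using (hT.1 h)
      exact Finset.erase_insert hiT



lemma key_sum (n na : ℕ) (hna : 1 ≤ na) (α β : Fin n → ℝ)
    (hcard : ∀ i j : Fin n, i ≠ j →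
      ((Finset.powersetCard na (Finset.univ : Finset (Fin n))).filter
        (fun S => i ∈ S ∧ j ∉ S)).card = (n-2).choose (na-1)) :
    ∑ S ∈ Finset.powersetCard na (Finset.univ : Finset (Fin n)),
      (∑ i ∈ S, α i) * (∑ j ∈ Sᶜ, β j)
    = ((n-2).choose (na-1) : ℝ) * ((∑ i, α i) * (∑ j, β j) - ∑ i, α i * β i) := by
  have step1 : ∀ S : Finset (Fin n),
      (∑ i ∈ S, α i) * (∑ j ∈ Sᶜ, β j)
      = ∑ i : Fin n, ∑ j : Fin n, if i ∈ S ∧ j ∉ S then α i * β j else 0 := by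
    intro S
    rw [Finset.sum_mul_sum]
    rw [show Sᶜ = Finset.univ.filter (fun j => j ∉ S) by ext x; simp]
    rw [show S = Finset.univ.filter (fun i => i ∈ S) from by ext x; simp]
    rw [Finset.sum_filter]
    congr 1
    ext i
    rw [Finset.sum_filter]
    by_cases hi : i ∈ S <;> simp [hi]
  simp_rw [step1]
  rw [Finset.sum_comm]
  have := fun i : Fin n => Finset.sum_comm (s := Finset.powersetCard na (Finset.univ : Finset (Fin n))) (t := (Finset.univ : Finset (Fin n))) (f := fun S j => if i ∈ S ∧ j ∉ S then α i * β j else 0)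
  simp_rw [this]
  have inner : ∀ i j : Fin n,
      (∑ S ∈ Finset.powersetCard na (Finset.univ : Finset (Fin n)),
        if i ∈ S ∧ j ∉ S then α i * β j else 0)
      = (if i = j then 0 else ((n-2).choose (na-1) : ℝ)) * (α i * β j) := by
    intro i j
    rw [← Finset.sum_filter]
    rw [Finset.sum_const, nsmul_eq_mul]
    by_cases hij : i = j
    · subst hij
      simp
    · rw [hcard i j hij]
      simp [hij]
  simp_rw [inner]
  have expand : ∀ i j : Fin n, (if i = j then (0:ℝ) else ((n-2).choose (na-1) : ℝ)) * (α i * β j)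
      = ((n-2).choose (na-1) : ℝ) * (α i * β j) - (if i = j then ((n-2).choose (na-1) : ℝ) * (α i * β j) else 0) := by
    intro i j
    by_cases h : i = j
    · simp [h]
    · simp [h]
  simp_rw [expand, Finset.sum_sub_distrib, Finset.sum_ite_eq, Finset.mem_univ, if_true]
  simp_rw [← Finset.mul_sum]
  rw [Finset.sum_mul_sum]
  simp_rw [← Finset.mul_sum]
  ring

theorem two_arm_means_covariance (n na nb : ℕ) (h1 : 1 ≤ na) (h2 : na + nb = n)
    (h3 : 1 ≤ nb) (hn : 2 ≤ n) (a b : Fin n → ℝ) :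
    (∑ S ∈ Finset.powersetCard na (Finset.univ : Finset (Fin n)),
        ((∑ i ∈ S, a i) / (na : ℝ) - (∑ i, a i) / (n : ℝ))
          * ((∑ i ∈ Sᶜ, b i) / (nb : ℝ) - (∑ i, b i) / (n : ℝ)))
      / ((Finset.powersetCard na (Finset.univ : Finset (Fin n))).card : ℝ)
    = -(1 / ((n : ℝ) - 1))
        * ((∑ i, (a i - (∑ j, a j) / (n : ℝ)) * (b i - (∑ j, b j) / (n : ℝ))) / (n : ℝ)) := by
  have key_sum : ∀ (α β : Fin n → ℝ),
      ∑ S ∈ Finset.powersetCard na (Finset.univ : Finset (Fin n)),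
        (∑ i ∈ S, α i) * (∑ j ∈ Sᶜ, β j)
      = ((n-2).choose (na-1) : ℝ) * ((∑ i, α i) * (∑ j, β j) - ∑ i, α i * β i) :=
    fun α β => key_sum n na h1 α β (fun i j hij => card_filt n na h1 i j hij)
  have nat_id : ((n-2).choose (na-1) : ℝ) * ((n:ℝ) * ((n:ℝ)-1)) = (n.choose na : ℝ) * ((na:ℝ) * (nb:ℝ)) := by
    have h := nat_id n na nb h1 h2 h3
    have hcast : ((n - 1 : ℕ) : ℝ) = (n : ℝ) - 1 := by
      have hh : 1 ≤ n := by omega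
      push_cast [hh]
      ring
    rw [← hcast]
    exact_mod_cast h
  have hna0 : (na:ℝ) ≠ 0 := Nat.cast_ne_zero.mpr (by omega)
  have hnb0 : (nb:ℝ) ≠ 0 := Nat.cast_ne_zero.mpr (by omega)
  have hn0 : (n:ℝ) ≠ 0 := Nat.cast_ne_zero.mpr (by omega)
  have hn1 : (n:ℝ) - 1 ≠ 0 := by
    have : (2:ℝ) ≤ n := by exact_mod_cast hn
    linarith
  have hch : ((n.choose na : ℕ):ℝ) ≠ 0 := by
    have := Nat.choose_pos (n := n) (k := na) (by omega)
    exact_mod_cast this.ne'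
  set A : ℝ := (∑ i, a i)/(n:ℝ) with hA
  set B : ℝ := (∑ i, b i)/(n:ℝ) with hB
  have hαsum : ∑ i, (a i - A) = 0 := by
    simp only [Finset.sum_sub_distrib, Finset.sum_const, Finset.card_univ,
      Fintype.card_fin, nsmul_eq_mul, hA]
    field_simp
    ring
  have hβsum : ∑ i, (b i - B) = 0 := by
    simp only [Finset.sum_sub_distrib, Finset.sum_const, Finset.card_univ,
      Fintype.card_fin, nsmul_eq_mul, hB]
    field_simp
    ring
  have hstep : ∀ S ∈ Finset.powersetCard na (Finset.univ : Finset (Fin n)),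
      ((∑ i ∈ S, a i)/(na:ℝ) - A) * ((∑ i ∈ Sᶜ, b i)/(nb:ℝ) - B)
      = ((∑ i ∈ S, (a i - A)) * (∑ j ∈ Sᶜ, (b j - B))) / ((na:ℝ)*(nb:ℝ)) := by
    intro S hS
    rw [Finset.mem_powersetCard] at hS
    have hSc : (Sᶜ).card = nb := by
      rw [Finset.card_compl, hS.2]
      simp only [Finset.card_univ, Fintype.card_fin]
      omega
    have e1 : ∑ i ∈ S, (a i - A) = ∑ i ∈ S, a i - (na:ℝ) * A := by
      simp [Finset.sum_sub_distrib, hS.2]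
    have e2 : ∑ j ∈ Sᶜ, (b j - B) = ∑ j ∈ Sᶜ, b j - (nb:ℝ) * B := by
      simp [Finset.sum_sub_distrib, hSc]
    rw [e1, e2]
    field_simp
  rw [Finset.sum_congr rfl hstep, ← Finset.sum_div,
    key_sum (fun i => a i - A) (fun i => b i - B), hαsum, hβsum,
    Finset.card_powersetCard, Finset.card_univ, Fintype.card_fin]
  have hbeta : (∑ i, (fun i => a i - A) i * (fun i => b i - B) i) = ∑ i, (a i - A) * (b i - B) := rfl
  rw [hbeta]
  set SS : ℝ := ∑ i, (a i - A) * (b i - B) with hSS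
  field_simp
  linear_combination (-SS) * nat_id
end

section
/- In the completely randomized two-arm setting, Var(ā_obs − b̄_obs) = ((n−n_a)/(n−1))·σ_a²/n_a + ((n−n_b)/(n−1))·σ_b²/n_b + (2/(n−1))·σ_ab, and this is bounded above by (n/(n−1))·(σ_a²/n_a + σ_b²/n_b). -/
open Finset


lemma count_subsets (n k : ℕ) (t : Finset (Fin n)) (ht : t.card ≤ k) :
    ((powersetCard k (univ : Finset (Fin n))).filter (fun S => t ⊆ S)).card
      = (n - t.card).choose (k - t.card) := by
  have : ((powersetCard k (univ : Finset (Fin n))).filter (fun S => t ⊆ S)).card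
      = (powersetCard (k - t.card) tᶜ).card := by
    apply Finset.card_nbij' (fun S => S \ t) (fun T => T ∪ t)
    · intro S hS
      simp only [Finset.mem_coe, mem_filter, mem_powersetCard] at hS
      obtain ⟨⟨_, hcard⟩, hts⟩ := hS
      simp only [Finset.mem_coe, mem_powersetCard]
      constructor
      · intro x hx
        simp only [mem_sdiff] at hx
        simp [mem_compl, hx.2]
      · rw [card_sdiff_of_subset hts, hcard]
    · intro T hT
      simp only [Finset.mem_coe, mem_powersetCard] at hT
      obtain ⟨hsub, hcard⟩ := hT
      have hdisj : Disjoint T t := by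
        rw [Finset.disjoint_left]
        intro x hx
        have := hsub hx
        simp [mem_compl] at this
        exact this
      simp only [Finset.mem_coe, mem_filter, mem_powersetCard]
      refine ⟨⟨subset_univ _, ?_⟩, subset_union_right⟩
      rw [card_union_of_disjoint hdisj, hcard]
      omega
    · intro S hS
      simp only [Finset.mem_coe, mem_filter, mem_powersetCard] at hS
      exact sdiff_union_of_subset hS.2
    · intro T hT
      simp only [Finset.mem_coe, mem_powersetCard] at hT
      have hdisj : Disjoint T t := by
        rw [Finset.disjoint_left]
        intro x hx
        have := hT.1 hx
        simp [mem_compl] at this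
        exact this
      show (T ∪ t) \ t = T; rw [union_sdiff_distrib, sdiff_self]; simp [sdiff_eq_self_of_disjoint hdisj]
  rw [this, card_powersetCard, card_compl]
  simp

lemma sum_sq_powersetCard (n k : ℕ) (h2 : 2 ≤ k) (c : Fin n → ℝ) :
    ∑ S ∈ powersetCard k (univ : Finset (Fin n)), (∑ i ∈ S, c i) ^ 2
      = ((n - 1).choose (k - 1) : ℝ) * ∑ i, (c i) ^ 2
        + ((n - 2).choose (k - 2) : ℝ) * ((∑ i, c i) ^ 2 - ∑ i, (c i) ^ 2) := by
  have key : ∀ S ∈ powersetCard k (univ : Finset (Fin n)),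
      (∑ i ∈ S, c i) ^ 2 = ∑ i, ∑ j, (if i ∈ S ∧ j ∈ S then c i * c j else 0) := by
    intro S _
    rw [sq, Finset.sum_mul_sum]
    rw [← Finset.sum_filter_add_sum_filter_not univ (· ∈ S)]
    have h1 : univ.filter (· ∈ S) = S := by ext x; simp
    rw [h1]
    have h2' : ∀ i ∈ S, (∑ j, if i ∈ S ∧ j ∈ S then c i * c j else 0)
        = ∑ j ∈ S, c i * c j := by
      intro i hi
      rw [← Finset.sum_filter]
      congr 1
      ext x; simp [hi]
    have h3' : ∀ i ∈ univ.filter (¬ · ∈ S), (∑ j, if i ∈ S ∧ j ∈ S then c i * c j else 0) = 0 := by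
      intro i hi
      simp only [mem_filter] at hi
      apply Finset.sum_eq_zero
      intro j _
      simp [hi.2]
    rw [Finset.sum_congr rfl h2', Finset.sum_eq_zero h3', add_zero]
  rw [Finset.sum_congr rfl key, Finset.sum_comm]
  have swap : ∀ i : Fin n, ∑ S ∈ powersetCard k (univ : Finset (Fin n)),
      ∑ j, (if i ∈ S ∧ j ∈ S then c i * c j else 0)
      = ∑ j, ∑ S ∈ powersetCard k (univ : Finset (Fin n)),
          (if i ∈ S ∧ j ∈ S then c i * c j else 0) := fun i => Finset.sum_comm
  rw [Finset.sum_congr rfl (fun i _ => swap i)]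
  have inner : ∀ i j : Fin n, ∑ S ∈ powersetCard k (univ : Finset (Fin n)),
      (if i ∈ S ∧ j ∈ S then c i * c j else 0)
      = (((powersetCard k (univ : Finset (Fin n))).filter (fun S => i ∈ S ∧ j ∈ S)).card : ℝ)
          * (c i * c j) := by
    intro i j
    rw [← Finset.sum_filter, Finset.sum_const, nsmul_eq_mul]
  have count : ∀ i j : Fin n,
      (((powersetCard k (univ : Finset (Fin n))).filter (fun S => i ∈ S ∧ j ∈ S)).card : ℝ)
      = if i = j then ((n - 1).choose (k - 1) : ℝ) else ((n - 2).choose (k - 2) : ℝ) := by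
    intro i j
    by_cases hij : i = j
    · subst hij
      simp only [if_pos rfl, and_self]
      have hf : filter (fun S => i ∈ S) (powersetCard k (univ : Finset (Fin n)))
          = filter (fun S => ({i} : Finset (Fin n)) ⊆ S) (powersetCard k (univ : Finset (Fin n))) :=
        filter_congr (fun S _ => by simp)
      rw [hf, count_subsets n k {i} (by simp; omega)]
      simp
    · rw [if_neg hij]
      rw [show ((powersetCard k (univ : Finset (Fin n))).filter (fun S => i ∈ S ∧ j ∈ S))
          = ((powersetCard k (univ : Finset (Fin n))).filter
              (fun S => ({i, j} : Finset (Fin n)) ⊆ S))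
          by apply filter_congr; intro S _; simp [insert_subset_iff]]
      rw [count_subsets n k {i, j} (by rw [card_insert_of_notMem (by simp [hij]), card_singleton]; omega)]
      rw [card_insert_of_notMem (by simp [hij]), card_singleton]
  simp only [inner, count]
  have expand : ∀ i : Fin n,
      ∑ j, (if i = j then ((n - 1).choose (k - 1) : ℝ) else ((n - 2).choose (k - 2) : ℝ)) * (c i * c j)
      = ((n - 2).choose (k - 2) : ℝ) * (c i * ∑ j, c j)
        + (((n - 1).choose (k - 1) : ℝ) - ((n - 2).choose (k - 2) : ℝ)) * (c i)^2 := by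
    intro i
    have : ∀ j : Fin n,
        (if i = j then ((n - 1).choose (k - 1) : ℝ) else ((n - 2).choose (k - 2) : ℝ)) * (c i * c j)
        = ((n - 2).choose (k - 2) : ℝ) * (c i * c j)
          + (if i = j then (((n - 1).choose (k - 1) : ℝ) - ((n - 2).choose (k - 2) : ℝ)) * (c i)^2 else 0) := by
      intro j
      by_cases hij : i = j
      · subst hij; simp [sq]; ring
      · simp [hij]
    rw [Finset.sum_congr rfl (fun j _ => this j), Finset.sum_add_distrib,
      Finset.sum_ite_eq univ i (fun _ => (((n - 1).choose (k - 1) : ℝ) - ((n - 2).choose (k - 2) : ℝ)) * (c i)^2),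
      if_pos (mem_univ i)]
    simp only [← Finset.mul_sum]
  rw [Finset.sum_congr rfl (fun i _ => expand i)]
  rw [Finset.sum_add_distrib, ← Finset.mul_sum, ← Finset.mul_sum, ← Finset.sum_mul]
  ring

lemma choose_coeff (n k : ℕ) (h2 : 2 ≤ k) (hkn : k ≤ n) :
    (((n - 1).choose (k - 1) : ℝ) - ((n - 2).choose (k - 2) : ℝ)) * ((n : ℝ) * ((n : ℝ) - 1))
      = (k : ℝ) * ((n : ℝ) - (k : ℝ)) * (n.choose k : ℝ) := by
  obtain ⟨d, rfl⟩ : ∃ d, n = k + d := ⟨n - k, by omega⟩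
  obtain ⟨j, rfl⟩ : ∃ j, k = j + 2 := ⟨k - 2, by omega⟩
  have e1 : (j + 2 + d) * (j + 1 + d).choose (j + 1) = (j + 2 + d).choose (j + 2) * (j + 2) := by
    have := Nat.add_one_mul_choose_eq (j + 1 + d) (j + 1)
    simpa [Nat.succ_eq_add_one] using (by omega : j + 1 + d + 1 = j + 2 + d) ▸ this
  have e2 : (j + 1 + d) * (j + d).choose j = (j + 1 + d).choose (j + 1) * (j + 1) := by
    have := Nat.add_one_mul_choose_eq (j + d) j
    simpa [Nat.succ_eq_add_one] using (by omega : j + d + 1 = j + 1 + d) ▸ this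
  have hc1 : ((j + 2 + d : ℕ) : ℝ) * ((j + 1 + d).choose (j + 1) : ℝ)
      = ((j + 2 + d).choose (j + 2) : ℝ) * ((j : ℝ) + 2) := by exact_mod_cast e1
  have hc2 : ((j + 1 + d : ℕ) : ℝ) * ((j + d).choose j : ℝ)
      = ((j + 1 + d).choose (j + 1) : ℝ) * ((j : ℝ) + 1) := by exact_mod_cast e2
  have hs1 : (j + 2 + d) - 1 = j + 1 + d := by omega
  have hs2 : (j + 2 + d) - 2 = j + d := by omega
  have hs3 : (j + 2) - 1 = j + 1 := by omega
  have hs4 : (j + 2) - 2 = j := by omega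
  rw [hs1, hs2, hs3, hs4]
  push_cast at hc1 hc2 ⊢
  linear_combination (d : ℝ) * hc1 - ((j : ℝ) + 2 + d) * hc2


lemma var_centered (n k : ℕ) (hk : 1 ≤ k) (hkn : k ≤ n) (hn : 2 ≤ n) (c : Fin n → ℝ)
    (hc : ∑ i, c i = 0) :
    ∑ S ∈ powersetCard k (univ : Finset (Fin n)), (∑ i ∈ S, c i) ^ 2
      = (k : ℝ) * ((n : ℝ) - (k : ℝ)) / ((n : ℝ) * ((n : ℝ) - 1)) * (n.choose k : ℝ)
          * ∑ i, (c i) ^ 2 := by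
  have hn2 : (2 : ℝ) ≤ (n : ℝ) := by exact_mod_cast hn
  have hd : (n : ℝ) * ((n : ℝ) - 1) ≠ 0 := by nlinarith
  rcases eq_or_lt_of_le hk with hk1 | hk2
  · subst hk1
    rw [powersetCard_one, Finset.sum_map]
    simp only [Function.Embedding.coeFn_mk, Finset.sum_singleton]
    rw [Nat.choose_one_right]
    have : ((1 : ℕ) : ℝ) * ((n : ℝ) - ((1 : ℕ) : ℝ)) / ((n : ℝ) * ((n : ℝ) - 1)) * (n : ℝ) = 1 := by
      field_simp [show (n : ℝ) - 1 ≠ 0 by linarith]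
      ring
    rw [this, one_mul]
  · have h2 : 2 ≤ k := hk2
    rw [sum_sq_powersetCard n k h2 c, hc]
    have key := choose_coeff n k h2 hkn
    field_simp [show (n : ℝ) - 1 ≠ 0 by linarith]
    linear_combination (∑ i, (c i) ^ 2) * key

set_option maxHeartbeats 1000000 in
theorem two_arm_diff_variance (n na nb : ℕ) (h1 : 1 ≤ na) (h3 : 1 ≤ nb)
    (h2 : na + nb = n) (hn : 2 ≤ n) (a b : Fin n → ℝ) :
    (∑ S ∈ Finset.powersetCard na (Finset.univ : Finset (Fin n)),
        (((∑ i ∈ S, a i) / (na : ℝ) - (∑ i ∈ Sᶜ, b i) / (nb : ℝ))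
          - ((∑ i, a i) / (n : ℝ) - (∑ i, b i) / (n : ℝ))) ^ 2)
      / ((Finset.powersetCard na (Finset.univ : Finset (Fin n))).card : ℝ)
    = (((n : ℝ) - na) / ((n : ℝ) - 1))
        * (((∑ i, (a i - (∑ j, a j) / (n : ℝ)) ^ 2) / (n : ℝ)) / (na : ℝ))
      + (((n : ℝ) - nb) / ((n : ℝ) - 1))
        * (((∑ i, (b i - (∑ j, b j) / (n : ℝ)) ^ 2) / (n : ℝ)) / (nb : ℝ))
      + (2 / ((n : ℝ) - 1))
        * ((∑ i, (a i - (∑ j, a j) / (n : ℝ)) * (b i - (∑ j, b j) / (n : ℝ))) / (n : ℝ))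
    ∧ (((n : ℝ) - na) / ((n : ℝ) - 1))
        * (((∑ i, (a i - (∑ j, a j) / (n : ℝ)) ^ 2) / (n : ℝ)) / (na : ℝ))
      + (((n : ℝ) - nb) / ((n : ℝ) - 1))
        * (((∑ i, (b i - (∑ j, b j) / (n : ℝ)) ^ 2) / (n : ℝ)) / (nb : ℝ))
      + (2 / ((n : ℝ) - 1))
        * ((∑ i, (a i - (∑ j, a j) / (n : ℝ)) * (b i - (∑ j, b j) / (n : ℝ))) / (n : ℝ))
      ≤ ((n : ℝ) / ((n : ℝ) - 1))
        * (((∑ i, (a i - (∑ j, a j) / (n : ℝ)) ^ 2) / (n : ℝ)) / (na : ℝ)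
          + ((∑ i, (b i - (∑ j, b j) / (n : ℝ)) ^ 2) / (n : ℝ)) / (nb : ℝ)) := by
  have hna0 : (na : ℝ) ≠ 0 := Nat.cast_ne_zero.2 (by omega)
  have hnb0 : (nb : ℝ) ≠ 0 := Nat.cast_ne_zero.2 (by omega)
  have hn0 : (n : ℝ) ≠ 0 := Nat.cast_ne_zero.2 (by omega)
  have hn2 : (2 : ℝ) ≤ (n : ℝ) := by exact_mod_cast hn
  have hn1 : (n : ℝ) - 1 ≠ 0 := by nlinarith
  have hsum : (na : ℝ) + (nb : ℝ) = (n : ℝ) := by exact_mod_cast h2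
  obtain ⟨abar, habar⟩ : ∃ x : ℝ, x = (∑ j, a j) / (n : ℝ) := ⟨_, rfl⟩
  obtain ⟨bbar, hbbar⟩ : ∃ x : ℝ, x = (∑ j, b j) / (n : ℝ) := ⟨_, rfl⟩
  rw [← habar, ← hbbar]
  have hA : ∑ j, a j = (n : ℝ) * abar := by rw [habar]; field_simp
  have hB : ∑ j, b j = (n : ℝ) * bbar := by rw [hbbar]; field_simp
  set c : Fin n → ℝ := fun i => (a i - abar) / (na : ℝ) + (b i - bbar) / (nb : ℝ) with hcdef
  have hsuma : ∑ i, (a i - abar) = 0 := by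
    rw [Finset.sum_sub_distrib, Finset.sum_const, card_univ, Fintype.card_fin, hA,
      nsmul_eq_mul]
    ring
  have hsumb : ∑ i, (b i - bbar) = 0 := by
    rw [Finset.sum_sub_distrib, Finset.sum_const, card_univ, Fintype.card_fin, hB,
      nsmul_eq_mul]
    ring
  have hc0 : ∑ i, c i = 0 := by
    rw [hcdef]
    rw [Finset.sum_add_distrib, ← Finset.sum_div, ← Finset.sum_div, hsuma, hsumb]
    simp
  have hterm : ∀ S ∈ powersetCard na (univ : Finset (Fin n)),
      (((∑ i ∈ S, a i) / (na : ℝ) - (∑ i ∈ Sᶜ, b i) / (nb : ℝ))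
          - (abar - bbar)) ^ 2
      = (∑ i ∈ S, c i) ^ 2 := by
    intro S hS
    have hScard : S.card = na := (mem_powersetCard.1 hS).2
    have hsplit : ∑ i ∈ Sᶜ, b i = (n : ℝ) * bbar - ∑ i ∈ S, b i := by
      rw [eq_sub_iff_add_eq, ← hB]
      exact Finset.sum_compl_add_sum S b
    congr 1
    rw [hcdef]
    simp only [Finset.sum_add_distrib, ← Finset.sum_div, Finset.sum_sub_distrib,
      Finset.sum_const, hScard, nsmul_eq_mul, hsplit]
    have hab0 : (na : ℝ) + (nb : ℝ) ≠ 0 := by rw [hsum]; exact hn0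
    have hab1 : (na : ℝ) + (nb : ℝ) - 1 ≠ 0 := by rw [hsum]; exact hn1
    rw [← hsum]
    field_simp
    ring
  have hcard : ((powersetCard na (univ : Finset (Fin n))).card : ℝ) = (n.choose na : ℝ) := by
    rw [card_powersetCard, card_univ, Fintype.card_fin]
  have hchoose : ((n.choose na : ℕ) : ℝ) ≠ 0 :=
    Nat.cast_ne_zero.2 (Nat.choose_pos (by omega)).ne'
  have hcsq : ∑ i, (c i) ^ 2
      = (∑ i, (a i - abar) ^ 2) / (na : ℝ) ^ 2
        + (∑ i, (a i - abar) * (b i - bbar)) * (2 / ((na : ℝ) * (nb : ℝ)))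
        + (∑ i, (b i - bbar) ^ 2) / (nb : ℝ) ^ 2 := by
    have hpt : ∀ i, (c i) ^ 2 = (a i - abar) ^ 2 / (na : ℝ) ^ 2
        + (a i - abar) * (b i - bbar) * (2 / ((na : ℝ) * (nb : ℝ)))
        + (b i - bbar) ^ 2 / (nb : ℝ) ^ 2 := by
      intro i
      rw [hcdef]
      field_simp
      ring
    rw [Finset.sum_congr rfl (fun i _ => hpt i), Finset.sum_add_distrib, Finset.sum_add_distrib,
      ← Finset.sum_div, ← Finset.sum_div, ← Finset.sum_mul]
  obtain ⟨Sa, hSa⟩ : ∃ x : ℝ, x = ∑ i, (a i - abar) ^ 2 := ⟨_, rfl⟩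
  obtain ⟨Sb, hSb⟩ : ∃ x : ℝ, x = ∑ i, (b i - bbar) ^ 2 := ⟨_, rfl⟩
  obtain ⟨Sab, hSab⟩ : ∃ x : ℝ, x = ∑ i, (a i - abar) * (b i - bbar) := ⟨_, rfl⟩
  rw [← hSa, ← hSb, ← hSab] at hcsq ⊢
  have hna' : (n : ℝ) - (na : ℝ) = (nb : ℝ) := by linarith
  have hnb' : (n : ℝ) - (nb : ℝ) = (na : ℝ) := by linarith
  constructor
  · rw [Finset.sum_congr rfl hterm,
      var_centered n na h1 (by omega) hn c hc0, hcard, hcsq, hna', hnb']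
    field_simp
    ring
  · have hq : (0:ℝ) ≤ ∑ i, ((a i - abar) - (b i - bbar)) ^ 2 :=
      Finset.sum_nonneg (fun i _ => sq_nonneg _)
    have hexp : ∑ i, ((a i - abar) - (b i - bbar)) ^ 2 = Sa - 2 * Sab + Sb := by
      have hpt : ∀ i : Fin n, ((a i - abar) - (b i - bbar)) ^ 2
          = ((a i - abar) ^ 2 - 2 * ((a i - abar) * (b i - bbar))) + (b i - bbar) ^ 2 :=
        fun i => by ring
      rw [Finset.sum_congr rfl (fun i _ => hpt i), Finset.sum_add_distrib,
        Finset.sum_sub_distrib, ← Finset.mul_sum, ← hSa, ← hSb, ← hSab]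
    rw [← sub_nonneg]
    have hrw : ((n : ℝ) / ((n : ℝ) - 1)) * (Sa / (n : ℝ) / (na : ℝ) + Sb / (n : ℝ) / (nb : ℝ))
      - ((((n : ℝ) - na) / ((n : ℝ) - 1)) * (Sa / (n : ℝ) / (na : ℝ))
        + (((n : ℝ) - nb) / ((n : ℝ) - 1)) * (Sb / (n : ℝ) / (nb : ℝ))
        + (2 / ((n : ℝ) - 1)) * (Sab / (n : ℝ)))
      = (Sa - 2 * Sab + Sb) / ((n : ℝ) * ((n : ℝ) - 1)) := by
      have hab0 : (na : ℝ) + (nb : ℝ) ≠ 0 := by rw [hsum]; exact hn0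
      have hab1 : (na : ℝ) + (nb : ℝ) - 1 ≠ 0 := by rw [hsum]; exact hn1
      rw [← hsum]
      field_simp
      ring
    rw [hrw, ← hexp]
    have hpos : (0 : ℝ) < (n : ℝ) * ((n : ℝ) - 1) := by nlinarith
    exact div_nonneg hq hpos.le
end

section
/- In the completely randomized two-arm setting, the mean squared cross-arm difference satisfies E[(1/(n_a n_b)) ∑_{i∈A} ∑_{j∈B} (a_i − b_j)²] = σ_a² + σ_b² + (2/(n−1))σ_ab + (ā − b̄)². -/
open Finset

lemma count_lemma {α : Type*} [DecidableEq α] (s : Finset α) (k : ℕ) (hk : 1 ≤ k)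
    (i j : α) (hi : i ∈ s) (hj : j ∈ s) (hij : i ≠ j) :
    ((s.powersetCard k).filter (fun t => i ∈ t ∧ j ∉ t)).card
      = (s.card - 2).choose (k - 1) := by
  have hcard : ((s.erase j).erase i).card = s.card - 2 := by
    rw [Finset.card_erase_of_mem (Finset.mem_erase.2 ⟨hij, hi⟩), Finset.card_erase_of_mem hj]; omega
  rw [← hcard, ← Finset.card_powersetCard]
  apply Finset.card_bij (fun t _ => t.erase i)
  · intro t ht
    simp only [Finset.mem_filter, Finset.mem_powersetCard] at ht
    obtain ⟨⟨hts, htk⟩, hit, hjt⟩ := ht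
    rw [Finset.mem_powersetCard]
    constructor
    · intro x hx
      rw [Finset.mem_erase] at hx
      rw [Finset.mem_erase, Finset.mem_erase]
      refine ⟨hx.1, ?_, hts hx.2⟩
      rintro rfl; exact hjt hx.2
    · rw [Finset.card_erase_of_mem hit, htk]
  · intro t ht t' ht' h
    simp only [Finset.mem_filter] at ht ht'
    have : insert i (t.erase i) = insert i (t'.erase i) := by rw [h]
    rwa [Finset.insert_erase ht.2.1, Finset.insert_erase ht'.2.1] at this
  · intro u hu
    rw [Finset.mem_powersetCard] at hu
    refine ⟨insert i u, ?_, ?_⟩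
    · simp only [Finset.mem_filter, Finset.mem_powersetCard]
      have hiu : i ∉ u := fun h => (Finset.mem_erase.1 (hu.1 h)).1 rfl
      refine ⟨⟨?_, ?_⟩, Finset.mem_insert_self _ _, ?_⟩
      · intro x hx
        rcases Finset.mem_insert.1 hx with rfl | hx
        · exact hi
        · exact Finset.mem_of_mem_erase (Finset.mem_of_mem_erase (hu.1 hx))
      · rw [Finset.card_insert_of_notMem hiu, hu.2]; omega
      · intro h
        rcases Finset.mem_insert.1 h with rfl | h
        · exact hij rfl
        · exact (Finset.mem_erase.1 (Finset.mem_of_mem_erase (hu.1 h))).1 rfl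
    · rw [Finset.erase_insert (fun h => (Finset.mem_erase.1 (hu.1 h)).1 rfl)]

lemma choose_identity (p q : ℕ) :
    (p+1)*(q+1)*((p+q+2).choose (p+1)) = (p+q+2)*((p+q+1)*((p+q).choose p)) := by
  have e1 : (p+q+1) * ((p+q).choose p) = (p+q+1).choose (p+1) * (p+1) := by
    simpa [Nat.succ_eq_add_one] using Nat.add_one_mul_choose_eq (p+q) p
  have h1 : (p+q+1).choose (p+1) = (p+q+1).choose q := by
    rw [← Nat.choose_symm (show q ≤ p+q+1 by omega)]; congr 1; omega
  have e2 : (p+q+2) * ((p+q+1).choose q) = (p+q+2).choose (q+1) * (q+1) := by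
    simpa [Nat.succ_eq_add_one, show p+q+1+1 = p+q+2 by omega] using Nat.add_one_mul_choose_eq (p+q+1) q
  have h2 : (p+q+2).choose (q+1) = (p+q+2).choose (p+1) := by
    rw [← Nat.choose_symm (show p+1 ≤ p+q+2 by omega)]; congr 1; omega
  calc (p+1)*(q+1)*((p+q+2).choose (p+1)) = (p+1)*(q+1)*((p+q+2).choose (q+1)) := by rw [h2]
    _ = (p+1)*((p+q+2)*((p+q+1).choose q)) := by rw [e2]; ring
    _ = (p+q+2)*((p+1)*((p+q+1).choose (p+1))) := by rw [h1]; ring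
    _ = (p+q+2)*((p+q+1)*((p+q).choose p)) := by rw [e1]; ring

theorem cross_arm_squared_diff_expectation (n na nb : ℕ)
    (h1 : 1 ≤ na) (h3 : 1 ≤ nb) (h2 : na + nb = n) (a b : Fin n → ℝ) :
    (∑ S ∈ Finset.powersetCard na (Finset.univ : Finset (Fin n)),
        (1 / ((na : ℝ) * (nb : ℝ))) * ∑ i ∈ S, ∑ j ∈ Sᶜ, (a i - b j) ^ 2)
      / ((Finset.powersetCard na (Finset.univ : Finset (Fin n))).card : ℝ)
    = (∑ i, (a i - (∑ j, a j) / (n : ℝ)) ^ 2) / (n : ℝ)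
      + (∑ i, (b i - (∑ j, b j) / (n : ℝ)) ^ 2) / (n : ℝ)
      + (2 / ((n : ℝ) - 1))
        * ((∑ i, (a i - (∑ j, a j) / (n : ℝ)) * (b i - (∑ j, b j) / (n : ℝ))) / (n : ℝ))
      + ((∑ i, a i) / (n : ℝ) - (∑ i, b i) / (n : ℝ)) ^ 2 := by
  have hn2 : 2 ≤ n := by omega
  set N : ℝ := (n : ℝ) with hNdef
  have hN0 : N ≠ 0 := by rw [hNdef]; exact Nat.cast_ne_zero.2 (by omega)
  have hN1 : N - 1 ≠ 0 := by
    rw [hNdef]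
    have : (2:ℝ) ≤ (n:ℝ) := by exact_mod_cast hn2
    linarith
  -- counting constants
  set C : ℕ := n.choose na with hCdef
  set C2 : ℕ := (n-2).choose (na-1) with hC2def
  have hcardP : ((Finset.powersetCard na (Finset.univ : Finset (Fin n))).card : ℝ) = (C : ℝ) := by
    rw [Finset.card_powersetCard, Finset.card_univ, Fintype.card_fin]
  -- the swap identity
  have hswap : (∑ S ∈ Finset.powersetCard na (Finset.univ : Finset (Fin n)),
        ∑ i ∈ S, ∑ j ∈ Sᶜ, (a i - b j) ^ 2)
      = (C2 : ℝ) * ∑ i : Fin n, ∑ j ∈ (Finset.univ : Finset (Fin n)).erase i, (a i - b j) ^ 2 := by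
    have hinner : ∀ S : Finset (Fin n), (∑ i ∈ S, ∑ j ∈ Sᶜ, (a i - b j)^2)
        = ∑ i : Fin n, ∑ j : Fin n, (if i ∈ S ∧ j ∉ S then (a i - b j)^2 else 0) := by
      intro S
      have A : ∀ g : Fin n → ℝ, (∑ i : Fin n, (if i ∈ S then g i else 0)) = ∑ i ∈ S, g i := by
        intro g; rw [Finset.sum_ite_mem, Finset.univ_inter]
      have B : ∀ g : Fin n → ℝ, (∑ j : Fin n, (if j ∉ S then g j else 0)) = ∑ j ∈ Sᶜ, g j := by
        intro g
        calc (∑ j : Fin n, (if j ∉ S then g j else 0))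
            = ∑ j : Fin n, (if j ∈ Sᶜ then g j else 0) := by
              apply Finset.sum_congr rfl; intro j _; simp [Finset.mem_compl]
          _ = ∑ j ∈ Finset.univ ∩ Sᶜ, g j := Finset.sum_ite_mem _ _ _
          _ = ∑ j ∈ Sᶜ, g j := by rw [Finset.univ_inter]
      rw [← A (fun i => ∑ j ∈ Sᶜ, (a i - b j)^2)]
      apply Finset.sum_congr rfl
      intro i _
      by_cases h : i ∈ S
      · simp only [h, if_true, true_and]
        exact (B (fun j => (a i - b j)^2)).symm
      · simp [h]
    rw [Finset.sum_congr rfl (fun S _ => hinner S), Finset.sum_comm]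
    have : ∀ i : Fin n, (∑ S ∈ Finset.powersetCard na (Finset.univ : Finset (Fin n)),
          ∑ j : Fin n, (if i ∈ S ∧ j ∉ S then (a i - b j)^2 else 0))
        = ∑ j : Fin n, ∑ S ∈ Finset.powersetCard na (Finset.univ : Finset (Fin n)),
            (if i ∈ S ∧ j ∉ S then (a i - b j)^2 else 0) := fun i => Finset.sum_comm
    rw [Finset.sum_congr rfl (fun i _ => this i)]
    have hcount : ∀ i j : Fin n, i ≠ j →
        (∑ S ∈ Finset.powersetCard na (Finset.univ : Finset (Fin n)),
          (if i ∈ S ∧ j ∉ S then (a i - b j)^2 else 0))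
        = (C2 : ℝ) * (a i - b j)^2 := by
      intro i j hij
      rw [Finset.sum_ite, Finset.sum_const_zero, add_zero, Finset.sum_const, nsmul_eq_mul]
      congr 1
      rw [count_lemma _ na h1 i j (Finset.mem_univ i) (Finset.mem_univ j) hij,
        Finset.card_univ, Fintype.card_fin]
    have hdiag : ∀ i : Fin n,
        (∑ S ∈ Finset.powersetCard na (Finset.univ : Finset (Fin n)),
          (if i ∈ S ∧ i ∉ S then (a i - b i)^2 else 0)) = 0 := by
      intro i
      apply Finset.sum_eq_zero
      intro S _
      simp only [ite_eq_right_iff]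
      tauto
    rw [Finset.mul_sum]
    apply Finset.sum_congr rfl
    intro i _
    rw [← Finset.sum_erase_add _ _ (Finset.mem_univ i), hdiag i, add_zero, Finset.mul_sum]
    apply Finset.sum_congr rfl
    intro j hj
    exact hcount i j (fun h => (Finset.mem_erase.1 hj).1 h.symm)
  -- scalar abbreviations
  set Sa : ℝ := ∑ i, a i with hSa
  set Sb : ℝ := ∑ i, b i with hSb
  set Qa : ℝ := ∑ i, (a i)^2 with hQa
  set Qb : ℝ := ∑ i, (b i)^2 with hQb
  set P : ℝ := ∑ i, (a i) * (b i) with hP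
  have hT : (∑ i : Fin n, ∑ j ∈ (Finset.univ : Finset (Fin n)).erase i, (a i - b j) ^ 2)
      = N*Qa + N*Qb - 2*Sa*Sb - (Qa + Qb - 2*P) := by
    have herase : ∀ i : Fin n, ∑ j ∈ (Finset.univ : Finset (Fin n)).erase i, (a i - b j)^2
        = (∑ j : Fin n, (a i - b j)^2) - (a i - b i)^2 :=
      fun i => Finset.sum_erase_eq_sub (Finset.mem_univ i)
    rw [Finset.sum_congr rfl (fun i _ => herase i), Finset.sum_sub_distrib]
    have hrow : ∀ i : Fin n, (∑ j : Fin n, (a i - b j)^2) = N*(a i)^2 - (a i)*(2*Sb) + Qb := by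
      intro i
      have : ∀ j : Fin n, (a i - b j)^2 = (a i)^2 - (b j) * (2 * a i) + (b j)^2 :=
        fun j => by ring
      rw [Finset.sum_congr rfl (fun j _ => this j), Finset.sum_add_distrib,
        Finset.sum_sub_distrib, Finset.sum_const, ← Finset.sum_mul, Finset.card_univ,
        Fintype.card_fin, nsmul_eq_mul, ← hSb, ← hQb, ← hNdef]
      ring
    rw [Finset.sum_congr rfl (fun i _ => hrow i), Finset.sum_add_distrib,
      Finset.sum_sub_distrib, Finset.sum_const, ← Finset.mul_sum, ← Finset.sum_mul,
      Finset.card_univ, Fintype.card_fin, nsmul_eq_mul, ← hSa, ← hQa, ← hNdef]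
    have hdiag2 : (∑ i : Fin n, (a i - b i)^2) = Qa - 2*P + Qb := by
      have : ∀ i : Fin n, (a i - b i)^2 = (a i)^2 - 2*((a i)*(b i)) + (b i)^2 :=
        fun i => by ring
      rw [Finset.sum_congr rfl (fun i _ => this i), Finset.sum_add_distrib,
        Finset.sum_sub_distrib, ← Finset.mul_sum, ← hQa, ← hQb, ← hP]
    rw [hdiag2]
    ring
  -- variance/covariance expansions
  have hvar : ∀ f : Fin n → ℝ, (∑ i, (f i - (∑ j, f j)/N)^2)
      = (∑ i, (f i)^2) - (∑ i, f i)^2/N := by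
    intro f
    have : ∀ i : Fin n, (f i - (∑ j, f j)/N)^2
        = (f i)^2 - (f i) * (2*((∑ j, f j)/N)) + ((∑ j, f j)/N)^2 := fun i => by ring
    rw [Finset.sum_congr rfl (fun i _ => this i), Finset.sum_add_distrib,
      Finset.sum_sub_distrib, Finset.sum_const, ← Finset.sum_mul, Finset.card_univ,
      Fintype.card_fin, nsmul_eq_mul, ← hNdef]
    field_simp
    ring
  have hcov : (∑ i, (a i - Sa/N) * (b i - Sb/N)) = P - Sa*Sb/N := by
    have : ∀ i : Fin n, (a i - Sa/N) * (b i - Sb/N)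
        = (a i)*(b i) - (a i)*(Sb/N) - (b i)*(Sa/N) + (Sa/N)*(Sb/N) := fun i => by ring
    rw [Finset.sum_congr rfl (fun i _ => this i), Finset.sum_add_distrib,
      Finset.sum_sub_distrib, Finset.sum_sub_distrib, Finset.sum_const, ← Finset.sum_mul,
      ← Finset.sum_mul, Finset.card_univ, Fintype.card_fin, nsmul_eq_mul,
      ← hSa, ← hSb, ← hP, ← hNdef]
    field_simp
    ring
  -- key counting identity over ℝ
  have hkeyN : na * nb * C = n * ((n-1) * C2) := by
    obtain ⟨p, rfl⟩ : ∃ p, na = p + 1 := ⟨na - 1, by omega⟩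
    obtain ⟨q, rfl⟩ : ∃ q, nb = q + 1 := ⟨nb - 1, by omega⟩
    have hn : n = p + q + 2 := by omega
    subst hn
    rw [hCdef, hC2def]
    have e1 : p + q + 2 - 2 = p + q := by omega
    have e2 : p + 1 - 1 = p := by omega
    rw [e1, e2]
    have e3 : p + q + 2 - 1 = p + q + 1 := by omega
    rw [e3]
    exact choose_identity p q
  have hkey : (na:ℝ) * (nb:ℝ) * (C:ℝ) = N * ((N-1) * (C2:ℝ)) := by
    have hcast : ((n:ℝ) - 1) = ((n-1 : ℕ) : ℝ) := by
      have : 1 ≤ n := by omega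
      push_cast [this]
      ring
    rw [hNdef, hcast]
    exact_mod_cast hkeyN
  have hC2pos : (0:ℝ) < (C2:ℝ) := by
    have : 0 < C2 := by
      rw [hC2def]
      exact Nat.choose_pos (by omega)
    exact_mod_cast this
  -- assemble
  rw [← Finset.mul_sum, hswap, hcardP, hT, hvar a, hvar b, hcov, ← hSa, ← hSb, ← hQa, ← hQb]
  have hna : ((na:ℝ)) ≠ 0 := by
    exact Nat.cast_ne_zero.2 (by omega)
  have hnb : ((nb:ℝ)) ≠ 0 := by
    exact Nat.cast_ne_zero.2 (by omega)
  have hC0 : ((C:ℝ)) ≠ 0 := by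
    have : 0 < C := by rw [hCdef]; exact Nat.choose_pos (by omega)
    exact_mod_cast this.ne'
  have hfrac : ((C2 : ℝ)) / ((na:ℝ) * (nb:ℝ) * (C:ℝ)) = 1 / (N * (N-1)) := by
    rw [div_eq_div_iff (mul_ne_zero (mul_ne_zero hna hnb) hC0) (mul_ne_zero hN0 hN1), hkey]
    ring
  calc 1 / ((na:ℝ) * (nb:ℝ)) * ((C2:ℝ) * (N * Qa + N * Qb - 2 * Sa * Sb - (Qa + Qb - 2 * P))) / (C:ℝ)
      = ((C2:ℝ) / ((na:ℝ) * (nb:ℝ) * (C:ℝ))) * (N * Qa + N * Qb - 2 * Sa * Sb - (Qa + Qb - 2 * P)) := by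
        ring
    _ = (1 / (N * (N-1))) * (N * Qa + N * Qb - 2 * Sa * Sb - (Qa + Qb - 2 * P)) := by
        rw [hfrac]
    _ = (Qa - Sa ^ 2 / N) / N + (Qb - Sb ^ 2 / N) / N + 2 / (N - 1) * ((P - Sa * Sb / N) / N)
        + (Sa / N - Sb / N) ^ 2 := by
        field_simp
        ring
end

section
/- In the completely randomized two-arm setting, the estimator V̂ = (1/(n_a n_b)) ∑_{i∈A} ∑_{j∈B} (a_i − b_j)² − ((n_a−1)/n_a) s_a² − ((n_b−1)/n_b) s_b² satisfies E[V̂] = Var(ā_obs − b̄_obs) + (ā − b̄)², so it is conservative with nonnegative bias (ā − b̄)². -/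
open Finset

lemma count_mem_aux (n na : ℕ) (hna : 1 ≤ na) (i : Fin n) :
    ((Finset.powersetCard na (Finset.univ : Finset (Fin n))).filter (fun S => i ∈ S)).card
      = (n-1).choose (na-1) := by
  have : ((Finset.powersetCard na (Finset.univ : Finset (Fin n))).filter (fun S => i ∈ S)).card
      = (Finset.powersetCard (na-1) ((Finset.univ : Finset (Fin n)).erase i)).card := by
    apply Finset.card_bij (fun S _ => S.erase i)
    · intro S hS
      simp only [mem_filter, mem_powersetCard] at hS
      rw [mem_powersetCard]
      exact ⟨erase_subset_erase _ hS.1.1, by rw [card_erase_of_mem hS.2, hS.1.2]⟩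
    · intro S hS T hT h
      simp only [mem_filter] at hS hT
      rw [← insert_erase hS.2, ← insert_erase hT.2, h]
    · intro T hT
      rw [mem_powersetCard] at hT
      have hiT : i ∉ T := fun h => (mem_erase.1 (hT.1 h)).1 rfl
      refine ⟨insert i T, ?_, erase_insert hiT⟩
      simp only [mem_filter, mem_powersetCard]
      refine ⟨⟨subset_univ _, ?_⟩, mem_insert_self _ _⟩
      rw [card_insert_of_notMem hiT, hT.2]
      omega
  rw [this, card_powersetCard, card_erase_of_mem (mem_univ i), card_univ, Fintype.card_fin]

lemma sum_over_subsets_aux (n na : ℕ) (hna : 1 ≤ na) (a : Fin n → ℝ) :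
    ∑ S ∈ Finset.powersetCard na (Finset.univ : Finset (Fin n)), ∑ i ∈ S, a i
      = ((n-1).choose (na-1) : ℝ) * ∑ i, a i := by
  have : ∀ S ∈ Finset.powersetCard na (Finset.univ : Finset (Fin n)),
      ∑ i ∈ S, a i = ∑ i : Fin n, if i ∈ S then a i else 0 := by
    intro S _
    rw [Finset.sum_ite_mem, univ_inter]
  rw [Finset.sum_congr rfl this, Finset.sum_comm, Finset.mul_sum]
  refine Finset.sum_congr rfl fun i _ => ?_
  rw [← Finset.sum_filter, Finset.sum_const, count_mem_aux n na hna i, nsmul_eq_mul]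

lemma pointwise_aux (n na nb : ℕ) (h1 : 1 ≤ na) (h3 : 1 ≤ nb) (a b : Fin n → ℝ)
    (S : Finset (Fin n)) (hS : S.card = na) (hc : Sᶜ.card = nb) :
    (1 / ((na : ℝ) * (nb : ℝ))) * ∑ i ∈ S, ∑ j ∈ Sᶜ, (a i - b j) ^ 2
      - (∑ i ∈ S, (a i - (∑ j ∈ S, a j) / (na : ℝ)) ^ 2) / (na : ℝ)
      - (∑ i ∈ Sᶜ, (b i - (∑ j ∈ Sᶜ, b j) / (nb : ℝ)) ^ 2) / (nb : ℝ)
    = ((∑ i ∈ S, a i) / (na : ℝ) - (∑ i ∈ Sᶜ, b i) / (nb : ℝ)) ^ 2 := by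
  have hna : (na : ℝ) ≠ 0 := Nat.cast_ne_zero.2 (by omega)
  have hnb : (nb : ℝ) ≠ 0 := Nat.cast_ne_zero.2 (by omega)
  have e1 : ∑ i ∈ S, ∑ j ∈ Sᶜ, (a i - b j) ^ 2
      = (nb : ℝ) * ∑ i ∈ S, (a i)^2 + (na : ℝ) * ∑ j ∈ Sᶜ, (b j)^2
        - 2 * (∑ i ∈ S, a i) * (∑ j ∈ Sᶜ, b j) := by
    simp only [sub_sq, Finset.sum_add_distrib, Finset.sum_sub_distrib, Finset.sum_const,
      ← Finset.sum_mul, ← Finset.mul_sum, hS, hc, nsmul_eq_mul]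
    ring
  have e2 : ∑ i ∈ S, (a i - (∑ j ∈ S, a j) / (na : ℝ)) ^ 2
      = ∑ i ∈ S, (a i)^2 - (∑ i ∈ S, a i)^2 / (na : ℝ) := by
    simp only [sub_sq, Finset.sum_add_distrib, Finset.sum_sub_distrib, Finset.sum_const,
      ← Finset.sum_mul, ← Finset.mul_sum, hS, nsmul_eq_mul]
    field_simp
    ring
  have e3 : ∑ i ∈ Sᶜ, (b i - (∑ j ∈ Sᶜ, b j) / (nb : ℝ)) ^ 2
      = ∑ i ∈ Sᶜ, (b i)^2 - (∑ i ∈ Sᶜ, b i)^2 / (nb : ℝ) := by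
    simp only [sub_sq, Finset.sum_add_distrib, Finset.sum_sub_distrib, Finset.sum_const,
      ← Finset.sum_mul, ← Finset.mul_sum, hc, nsmul_eq_mul]
    field_simp
    ring
  rw [e1, e2, e3]
  field_simp
  ring

theorem cross_arm_variance_estimator_conservative (n na nb : ℕ)
    (h1 : 1 ≤ na) (h3 : 1 ≤ nb) (h2 : na + nb = n) (a b : Fin n → ℝ) :
    (∑ S ∈ Finset.powersetCard na (Finset.univ : Finset (Fin n)),
        ((1 / ((na : ℝ) * (nb : ℝ))) * ∑ i ∈ S, ∑ j ∈ Sᶜ, (a i - b j) ^ 2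
          - (∑ i ∈ S, (a i - (∑ j ∈ S, a j) / (na : ℝ)) ^ 2) / (na : ℝ)
          - (∑ i ∈ Sᶜ, (b i - (∑ j ∈ Sᶜ, b j) / (nb : ℝ)) ^ 2) / (nb : ℝ)))
      / ((Finset.powersetCard na (Finset.univ : Finset (Fin n))).card : ℝ)
    = (∑ S ∈ Finset.powersetCard na (Finset.univ : Finset (Fin n)),
        (((∑ i ∈ S, a i) / (na : ℝ) - (∑ i ∈ Sᶜ, b i) / (nb : ℝ))
          - ((∑ i, a i) / (n : ℝ) - (∑ i, b i) / (n : ℝ))) ^ 2)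
      / ((Finset.powersetCard na (Finset.univ : Finset (Fin n))).card : ℝ)
      + ((∑ i, a i) / (n : ℝ) - (∑ i, b i) / (n : ℝ)) ^ 2
    ∧ 0 ≤ ((∑ i, a i) / (n : ℝ) - (∑ i, b i) / (n : ℝ)) ^ 2 := by
  refine ⟨?_, sq_nonneg _⟩
  set P := Finset.powersetCard na (Finset.univ : Finset (Fin n)) with hP
  set X : Finset (Fin n) → ℝ :=
    fun S => (∑ i ∈ S, a i) / (na : ℝ) - (∑ i ∈ Sᶜ, b i) / (nb : ℝ) with hX
  set δ : ℝ := (∑ i, a i) / (n : ℝ) - (∑ i, b i) / (n : ℝ) with hδ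
  have hna : (na : ℝ) ≠ 0 := Nat.cast_ne_zero.2 (by omega)
  have hnb : (nb : ℝ) ≠ 0 := Nat.cast_ne_zero.2 (by omega)
  have hn' : (n : ℝ) ≠ 0 := Nat.cast_ne_zero.2 (by omega)
  have hCpos : 0 < P.card := by
    rw [hP, card_powersetCard, card_univ, Fintype.card_fin]
    exact Nat.choose_pos (by omega)
  have hC : (P.card : ℝ) ≠ 0 := Nat.cast_ne_zero.2 hCpos.ne'
  -- pointwise rewriting of the LHS numerator
  have lhs_eq : ∑ S ∈ P,
      ((1 / ((na : ℝ) * (nb : ℝ))) * ∑ i ∈ S, ∑ j ∈ Sᶜ, (a i - b j) ^ 2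
        - (∑ i ∈ S, (a i - (∑ j ∈ S, a j) / (na : ℝ)) ^ 2) / (na : ℝ)
        - (∑ i ∈ Sᶜ, (b i - (∑ j ∈ Sᶜ, b j) / (nb : ℝ)) ^ 2) / (nb : ℝ))
      = ∑ S ∈ P, X S ^ 2 := by
    refine Finset.sum_congr rfl fun S hS => ?_
    rw [hP, mem_powersetCard] at hS
    have hcard : S.card = na := hS.2
    have hcc : Sᶜ.card = nb := by
      rw [card_compl, Fintype.card_fin, hcard]; omega
    exact pointwise_aux n na nb h1 h3 a b S hcard hcc
  -- key combinatorial identity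
  have hkeyN : n * (n-1).choose (na-1) = na * n.choose na := by
    obtain ⟨m, rfl⟩ : ∃ m, n = m + 1 := ⟨n - 1, by omega⟩
    obtain ⟨k, rfl⟩ : ∃ k, na = k + 1 := ⟨na - 1, by omega⟩
    simpa [Nat.succ_sub_one, mul_comm] using Nat.add_one_mul_choose_eq m k
  have hCchoose : P.card = n.choose na := by
    rw [hP, card_powersetCard, card_univ, Fintype.card_fin]
  have hkey : (n : ℝ) * ((n-1).choose (na-1) : ℝ) = (na : ℝ) * (P.card : ℝ) := by
    rw [hCchoose]; exact_mod_cast hkeyN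
  have hn2 : (na : ℝ) + (nb : ℝ) = (n : ℝ) := by exact_mod_cast congrArg (Nat.cast : ℕ → ℝ) h2
  have e1 : (((n-1).choose (na-1) : ℝ)) / (na : ℝ) = (P.card : ℝ) / (n : ℝ) := by
    rw [div_eq_div_iff hna hn']
    linear_combination hkey
  have e2 : ((P.card : ℝ) - ((n-1).choose (na-1) : ℝ)) / (nb : ℝ) = (P.card : ℝ) / (n : ℝ) := by
    rw [div_eq_div_iff hnb hn']
    linear_combination -hkey - (P.card : ℝ) * hn2
  -- expectation of X
  have hsumX : ∑ S ∈ P, X S = (P.card : ℝ) * δ := by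
    have hb : ∀ S ∈ P, ∑ j ∈ Sᶜ, b j = ∑ j, b j - ∑ j ∈ S, b j := by
      intro S _
      rw [← Finset.sum_add_sum_compl S b]; ring
    have : ∑ S ∈ P, X S
        = (∑ S ∈ P, ∑ i ∈ S, a i) / (na : ℝ)
          - ((P.card : ℝ) * ∑ j, b j - ∑ S ∈ P, ∑ i ∈ S, b i) / (nb : ℝ) := by
      rw [hX]
      rw [Finset.sum_sub_distrib, ← Finset.sum_div, ← Finset.sum_div,
        Finset.sum_congr rfl hb, Finset.sum_sub_distrib, Finset.sum_const, nsmul_eq_mul]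
    rw [this, sum_over_subsets_aux n na h1 a, sum_over_subsets_aux n na h1 b]
    calc ((n-1).choose (na-1) : ℝ) * (∑ i, a i) / (na : ℝ)
          - ((P.card : ℝ) * ∑ j, b j - ((n-1).choose (na-1) : ℝ) * ∑ i, b i) / (nb : ℝ)
        = (((n-1).choose (na-1) : ℝ) / (na : ℝ)) * (∑ i, a i)
          - (((P.card : ℝ) - ((n-1).choose (na-1) : ℝ)) / (nb : ℝ)) * (∑ i, b i) := by ring
      _ = ((P.card : ℝ) / (n : ℝ)) * (∑ i, a i) - ((P.card : ℝ) / (n : ℝ)) * (∑ i, b i) := by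
          rw [e1, e2]
      _ = (P.card : ℝ) * δ := by rw [hδ]; ring
  -- RHS numerator
  have rhs_eq : ∑ S ∈ P, (X S - δ) ^ 2 = ∑ S ∈ P, X S ^ 2 - (P.card : ℝ) * δ ^ 2 := by
    have expand : ∀ S ∈ P, (X S - δ) ^ 2 = X S ^ 2 - 2 * δ * X S + δ ^ 2 :=
      fun S _ => by ring
    rw [Finset.sum_congr rfl expand, Finset.sum_add_distrib, Finset.sum_sub_distrib,
      Finset.sum_const, nsmul_eq_mul, ← Finset.mul_sum, hsumX]
    ring
  rw [lhs_eq, rhs_eq]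
  field_simp
  ring
end

section
/- For a simple random sample of size m without replacement from a finite population x_1,...,x_N (2 ≤ m, N > 3), the variance of the sample central second moment M_2 = (1/m)∑_{i∈S}(X_i − X̄_m)² is Var(M_2) = ((m−1)N(N−m))/(m³(N−1)²(N−2)(N−3)) · [(mN − N − m − 1)(N−1)m_4 − (mN² − 3N² + 6N − 3m − 3)m_2²], where m_r are the population central moments. -/
open Finset

theorem count_supersets (N m : ℕ) (T : Finset (Fin N)) (h : T.card ≤ m) :
    ((powersetCard m (univ : Finset (Fin N))).filter (fun S => T ⊆ S)).card
      = (N - T.card).choose (m - T.card) := by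
  have key : ((powersetCard m (univ : Finset (Fin N))).filter (fun S => T ⊆ S)).card
      = (powersetCard (m - T.card) Tᶜ).card := by
    apply Finset.card_bij' (fun S _ => S \ T) (fun U _ => U ∪ T)
    · intro S hS
      simp only [mem_filter, mem_powersetCard] at hS
      obtain ⟨⟨_, hcard⟩, hTS⟩ := hS
      simp only [mem_powersetCard]
      refine ⟨fun x hx => ?_, ?_⟩
      · simp only [mem_sdiff] at hx
        simp [hx.2]
      · rw [card_sdiff_of_subset hTS, hcard]
    · intro U hU
      simp only [mem_powersetCard] at hU
      obtain ⟨hUc, hcard⟩ := hU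
      have hdisj : Disjoint U T := by
        intro V hVU hVT x hx
        have := hUc (hVU hx)
        simp only [mem_compl] at this
        exact absurd (hVT hx) this
      simp only [mem_filter, mem_powersetCard]
      refine ⟨⟨subset_univ _, ?_⟩, subset_union_right⟩
      rw [card_union_of_disjoint hdisj, hcard]
      omega
    · intro S hS
      simp only [mem_filter] at hS
      exact sdiff_union_of_subset hS.2
    · intro U hU
      simp only [mem_powersetCard] at hU
      have hdisj : Disjoint U T := by
        intro V hVU hVT x hx
        have := hU.1 (hVU hx)
        simp only [mem_compl] at this
        exact absurd (hVT hx) this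
      exact union_sdiff_cancel_right hdisj
  rw [key, card_powersetCard, card_compl]
  simp

theorem count_supersets_zero (N m : ℕ) (T : Finset (Fin N)) (h : m < T.card) :
    ((powersetCard m (univ : Finset (Fin N))).filter (fun S => T ⊆ S)).card = 0 := by
  rw [Finset.card_eq_zero, Finset.filter_eq_empty_iff]
  intro S hS hTS
  simp only [mem_powersetCard] at hS
  have := Finset.card_le_card hTS
  omega

def cnt (N m s : ℕ) : ℕ := if s ≤ m then (N - s).choose (m - s) else 0

theorem choose_step (N m : ℕ) (hm : 1 ≤ m) (h : m ≤ N) :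
    (N - 1).choose (m - 1) * N = N.choose m * m := by
  have := Nat.add_one_mul_choose_eq (N - 1) (m - 1)
  rw [show N - 1 + 1 = N by omega, show m - 1 + 1 = m by omega] at this
  rw [mul_comm]
  exact this

theorem cnt_ratio (N m : ℕ) (hmN : m ≤ N) : ∀ s, s ≤ N →
    (cnt N m s : ℝ) * ∏ i ∈ range s, ((N : ℝ) - i)
      = (N.choose m : ℝ) * ∏ i ∈ range s, ((m : ℝ) - i) := by
  intro s
  induction s with
  | zero => intro _; simp [cnt]
  | succ s ih =>
    intro hs
    have hsN : s ≤ N := by omega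
    rw [prod_range_succ, prod_range_succ]
    by_cases hsm : s + 1 ≤ m
    · have hcnt : cnt N m (s + 1) * (N - s) = cnt N m s * (m - s) := by
        simp only [cnt, if_pos hsm, if_pos (by omega : s ≤ m)]
        have := choose_step (N - s) (m - s) (by omega) (by omega)
        rw [show N - s - 1 = N - (s+1) by omega, show m - s - 1 = m - (s+1) by omega] at this
        omega
      have hNs : ((N : ℝ) - s) = ((N - s : ℕ) : ℝ) := by
        push_cast [Nat.cast_sub hsN]; ring
      have hms : ((m : ℝ) - s) = ((m - s : ℕ) : ℝ) := by
        push_cast [Nat.cast_sub (by omega : s ≤ m)]; ring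
      calc (cnt N m (s+1) : ℝ) * ((∏ i ∈ range s, ((N:ℝ) - i)) * ((N:ℝ) - s))
          = ((cnt N m (s+1) * (N - s) : ℕ) : ℝ) * ∏ i ∈ range s, ((N:ℝ) - i) := by
            rw [hNs]; push_cast; ring
        _ = ((cnt N m s * (m - s) : ℕ) : ℝ) * ∏ i ∈ range s, ((N:ℝ) - i) := by rw [hcnt]
        _ = ((m:ℝ) - s) * ((cnt N m s : ℝ) * ∏ i ∈ range s, ((N:ℝ) - i)) := by
            rw [hms]; push_cast; ring
        _ = ((m:ℝ) - s) * ((N.choose m : ℝ) * ∏ i ∈ range s, ((m:ℝ) - i)) := by rw [ih hsN]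
        _ = (N.choose m : ℝ) * ((∏ i ∈ range s, ((m:ℝ) - i)) * ((m:ℝ) - s)) := by ring
    · have h0 : cnt N m (s + 1) = 0 := by simp [cnt, hsm]
      have hm0 : ((m : ℝ) - m) = 0 := by ring
      rw [h0]
      by_cases hsm' : s ≤ m
      · have : m = s := by omega
        subst this
        simp
      · have h0' : cnt N m s = 0 := by simp [cnt]; omega
        have := ih hsN
        rw [h0'] at this
        simp only [Nat.cast_zero, zero_mul] at this ⊢
        rw [← mul_assoc, ← this]
        ring

variable {N m : ℕ}

theorem ite_mem_sum (S : Finset (Fin N)) (f : Fin N → ℝ) :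
    ∑ i ∈ S, f i = ∑ i : Fin N, if i ∈ S then f i else 0 := by
  rw [Finset.sum_ite_mem, Finset.univ_inter]

theorem swap3 (a b c : Fin N → ℝ) :
    ∑ S ∈ powersetCard m (univ : Finset (Fin N)),
        (∑ i ∈ S, a i) * (∑ i ∈ S, b i) * (∑ i ∈ S, c i)
      = ∑ i, a i * ∑ j, b j * ∑ k, c k *
          (((powersetCard m (univ : Finset (Fin N))).filter
          (fun S => insert k (insert j (insert i (∅ : Finset (Fin N)))) ⊆ S)).card : ℝ) := by
  have h1 : ∀ i j k : Fin N, (((powersetCard m (univ : Finset (Fin N))).filter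
      (fun S => insert k (insert j (insert i (∅ : Finset (Fin N)))) ⊆ S)).card : ℝ)
      = ∑ S ∈ powersetCard m (univ : Finset (Fin N)),
          if k ∈ S ∧ j ∈ S ∧ i ∈ S then (1:ℝ) else 0 := by
    intro i j k
    rw [Finset.sum_boole]
    congr 2
    apply Finset.filter_congr
    intro S _
    simp [Finset.insert_subset_iff]
  have key : ∀ S ∈ powersetCard m (univ : Finset (Fin N)),
      (∑ i ∈ S, a i) * (∑ i ∈ S, b i) * (∑ i ∈ S, c i)
      = ∑ i, ∑ j, ∑ k, a i * (b j * (c k *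
          if k ∈ S ∧ j ∈ S ∧ i ∈ S then (1:ℝ) else 0)) := by
    intro S _
    rw [ite_mem_sum S a, ite_mem_sum S b, ite_mem_sum S c, Finset.sum_mul_sum,
      Finset.sum_mul]
    apply Finset.sum_congr rfl; intro i _
    rw [Finset.sum_mul]
    apply Finset.sum_congr rfl; intro j _
    rw [Finset.mul_sum]
    apply Finset.sum_congr rfl; intro k _
    by_cases hi : i ∈ S <;> by_cases hj : j ∈ S <;> by_cases hk : k ∈ S <;>
      simp [hi, hj, hk] <;> ring
  rw [Finset.sum_congr rfl key]
  conv_rhs => simp only [h1, Finset.mul_sum]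
  rw [Finset.sum_comm]
  apply Finset.sum_congr rfl; intro i _
  rw [Finset.sum_comm]
  exact Finset.sum_congr rfl fun j _ => Finset.sum_comm

theorem swap4 (a b c d : Fin N → ℝ) :
    ∑ S ∈ powersetCard m (univ : Finset (Fin N)),
        (∑ i ∈ S, a i) * (∑ i ∈ S, b i) * (∑ i ∈ S, c i) * (∑ i ∈ S, d i)
      = ∑ i, a i * ∑ j, b j * ∑ k, c k * ∑ l, d l *
          (((powersetCard m (univ : Finset (Fin N))).filter
          (fun S => insert l (insert k (insert j (insert i (∅ : Finset (Fin N))))) ⊆ S)).card : ℝ) := by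
  have h1 : ∀ i j k l : Fin N, (((powersetCard m (univ : Finset (Fin N))).filter
      (fun S => insert l (insert k (insert j (insert i (∅ : Finset (Fin N))))) ⊆ S)).card : ℝ)
      = ∑ S ∈ powersetCard m (univ : Finset (Fin N)),
          if l ∈ S ∧ k ∈ S ∧ j ∈ S ∧ i ∈ S then (1:ℝ) else 0 := by
    intro i j k l
    rw [Finset.sum_boole]
    congr 2
    apply Finset.filter_congr
    intro S _
    simp [Finset.insert_subset_iff]
  have key : ∀ S ∈ powersetCard m (univ : Finset (Fin N)),
      (∑ i ∈ S, a i) * (∑ i ∈ S, b i) * (∑ i ∈ S, c i) * (∑ i ∈ S, d i)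
      = ∑ i, ∑ j, ∑ k, ∑ l, a i * (b j * (c k * (d l *
          if l ∈ S ∧ k ∈ S ∧ j ∈ S ∧ i ∈ S then (1:ℝ) else 0))) := by
    intro S _
    rw [ite_mem_sum S a, ite_mem_sum S b, ite_mem_sum S c, ite_mem_sum S d,
      Finset.sum_mul_sum, Finset.sum_mul, Finset.sum_mul]
    apply Finset.sum_congr rfl; intro i _
    rw [Finset.sum_mul, Finset.sum_mul]
    apply Finset.sum_congr rfl; intro j _
    rw [mul_assoc, Finset.sum_mul_sum, Finset.mul_sum]
    apply Finset.sum_congr rfl; intro k _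
    rw [Finset.mul_sum]
    apply Finset.sum_congr rfl; intro l _
    by_cases hi : i ∈ S <;> by_cases hj : j ∈ S <;> by_cases hk : k ∈ S <;>
      by_cases hl : l ∈ S <;> simp [hi, hj, hk, hl] <;> ring
  rw [Finset.sum_congr rfl key]
  conv_rhs => simp only [h1, Finset.mul_sum]
  rw [Finset.sum_comm]
  apply Finset.sum_congr rfl; intro i _
  rw [Finset.sum_comm]
  apply Finset.sum_congr rfl; intro j _
  rw [Finset.sum_comm]
  exact Finset.sum_congr rfl fun k _ => Finset.sum_comm

variable {N : ℕ}

noncomputable def e1 (y : Fin N → ℝ) (w : ℕ → ℝ) (T : Finset (Fin N)) : ℝ :=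
  (∑ l ∈ T, y l) * (w T.card - w (T.card + 1))

noncomputable def e2 (y : Fin N → ℝ) (w : ℕ → ℝ) (T : Finset (Fin N)) : ℝ :=
  (∑ l ∈ T, y l) ^ 2 * (w T.card - w (T.card + 1))
    + ((∑ l, (y l) ^ 2) - (∑ l ∈ T, (y l) ^ 2) - (∑ l ∈ T, y l) ^ 2)
        * (w (T.card + 1) - w (T.card + 2))

noncomputable def e3 (y : Fin N → ℝ) (w : ℕ → ℝ) (T : Finset (Fin N)) : ℝ :=
  (∑ l ∈ T, y l) ^ 3 * (w T.card - w (T.card + 1))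
    + (3 * (∑ l ∈ T, y l) * ((∑ l, (y l) ^ 2) - (∑ l ∈ T, (y l) ^ 2))
        - 2 * (∑ l ∈ T, y l) ^ 3 + ((∑ l, (y l) ^ 3) - (∑ l ∈ T, (y l) ^ 3)))
        * (w (T.card + 1) - w (T.card + 2))
    + ((∑ l ∈ T, y l) ^ 3 - 3 * (∑ l ∈ T, y l) * ((∑ l, (y l) ^ 2) - (∑ l ∈ T, (y l) ^ 2))
        - 2 * ((∑ l, (y l) ^ 3) - (∑ l ∈ T, (y l) ^ 3)))
        * (w (T.card + 2) - w (T.card + 3))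

section
variable (y : Fin N → ℝ) (w : ℕ → ℝ)

theorem compl_sum_pow (T : Finset (Fin N)) (r : ℕ) :
    ∑ l ∈ Tᶜ, (y l) ^ r = (∑ l, (y l) ^ r) - ∑ l ∈ T, (y l) ^ r := by
  have := Finset.sum_add_sum_compl T (fun l => (y l) ^ r)
  linarith

theorem compl_sum (hy : ∑ i, y i = 0) (T : Finset (Fin N)) :
    ∑ l ∈ Tᶜ, y l = -∑ l ∈ T, y l := by
  have := Finset.sum_add_sum_compl T y
  rw [hy] at this
  linarith

theorem L1 (hy : ∑ i, y i = 0) (T : Finset (Fin N)) :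
    ∑ l, y l * w ((insert l T).card) = e1 y w T := by
  rw [← Finset.sum_add_sum_compl T (fun l => y l * w ((insert l T).card))]
  have h1 : ∑ l ∈ T, y l * w ((insert l T).card) = (∑ l ∈ T, y l) * w T.card := by
    rw [Finset.sum_mul]
    exact Finset.sum_congr rfl fun l hl => by rw [Finset.insert_eq_self.2 hl]
  have h2 : ∑ l ∈ Tᶜ, y l * w ((insert l T).card) = (∑ l ∈ Tᶜ, y l) * w (T.card + 1) := by
    rw [Finset.sum_mul]
    exact Finset.sum_congr rfl fun l hl => by
      rw [Finset.card_insert_of_notMem (Finset.mem_compl.1 hl)]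
  rw [h1, h2, compl_sum y hy T, e1]
  ring

theorem L1sq (T : Finset (Fin N)) :
    ∑ l, (y l) ^ 2 * w ((insert l T).card)
      = (∑ l ∈ T, (y l) ^ 2) * w T.card
        + ((∑ l, (y l) ^ 2) - ∑ l ∈ T, (y l) ^ 2) * w (T.card + 1) := by
  rw [← Finset.sum_add_sum_compl T (fun l => (y l) ^ 2 * w ((insert l T).card))]
  have h1 : ∑ l ∈ T, (y l) ^ 2 * w ((insert l T).card) = (∑ l ∈ T, (y l) ^ 2) * w T.card := by
    rw [Finset.sum_mul]
    exact Finset.sum_congr rfl fun l hl => by rw [Finset.insert_eq_self.2 hl]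
  have h2 : ∑ l ∈ Tᶜ, (y l) ^ 2 * w ((insert l T).card)
      = (∑ l ∈ Tᶜ, (y l) ^ 2) * w (T.card + 1) := by
    rw [Finset.sum_mul]
    exact Finset.sum_congr rfl fun l hl => by
      rw [Finset.card_insert_of_notMem (Finset.mem_compl.1 hl)]
  rw [h1, h2, compl_sum_pow y T 2]

theorem L2 (hy : ∑ i, y i = 0) (T : Finset (Fin N)) :
    ∑ j, y j * e1 y w (insert j T) = e2 y w T := by
  rw [← Finset.sum_add_sum_compl T (fun j => y j * e1 y w (insert j T))]
  have h1 : ∑ j ∈ T, y j * e1 y w (insert j T) = (∑ j ∈ T, y j) * e1 y w T := by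
    rw [Finset.sum_mul]
    exact Finset.sum_congr rfl fun j hj => by rw [Finset.insert_eq_self.2 hj]
  have h2 : ∑ j ∈ Tᶜ, y j * e1 y w (insert j T)
      = (∑ j ∈ Tᶜ, (y j) ^ 2) * (w (T.card + 1) - w (T.card + 2))
        + (∑ j ∈ Tᶜ, y j) * ((∑ l ∈ T, y l) * (w (T.card + 1) - w (T.card + 2))) := by
    rw [Finset.sum_mul, Finset.sum_mul, ← Finset.sum_add_distrib]
    apply Finset.sum_congr rfl
    intro j hj
    have hj' := Finset.mem_compl.1 hj
    rw [e1, Finset.sum_insert hj', Finset.card_insert_of_notMem hj']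
    ring
  rw [h1, h2, compl_sum_pow y T 2, compl_sum y hy T, e1, e2]
  ring

theorem L3 (hy : ∑ i, y i = 0) (T : Finset (Fin N)) :
    ∑ k, y k * e2 y w (insert k T) = e3 y w T := by
  rw [← Finset.sum_add_sum_compl T (fun k => y k * e2 y w (insert k T))]
  have h1 : ∑ k ∈ T, y k * e2 y w (insert k T) = (∑ k ∈ T, y k) * e2 y w T := by
    rw [Finset.sum_mul]
    exact Finset.sum_congr rfl fun k hk => by rw [Finset.insert_eq_self.2 hk]
  have h2 : ∑ k ∈ Tᶜ, y k * e2 y w (insert k T)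
      = (∑ k ∈ Tᶜ, y k) * (((∑ l ∈ T, y l) ^ 2 * (w (T.card + 1) - w (T.card + 2)))
            + ((∑ l, (y l) ^ 2) - (∑ l ∈ T, (y l) ^ 2) - (∑ l ∈ T, y l) ^ 2)
              * (w (T.card + 2) - w (T.card + 3)))
        + (∑ k ∈ Tᶜ, (y k) ^ 2) * (2 * (∑ l ∈ T, y l) * (w (T.card + 1) - w (T.card + 2))
            - 2 * (∑ l ∈ T, y l) * (w (T.card + 2) - w (T.card + 3)))
        + (∑ k ∈ Tᶜ, (y k) ^ 3) * ((w (T.card + 1) - w (T.card + 2))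
            - 2 * (w (T.card + 2) - w (T.card + 3))) := by
    rw [Finset.sum_mul, Finset.sum_mul, Finset.sum_mul, ← Finset.sum_add_distrib,
      ← Finset.sum_add_distrib]
    apply Finset.sum_congr rfl
    intro k hk
    have hk' := Finset.mem_compl.1 hk
    rw [e2, Finset.sum_insert hk', Finset.card_insert_of_notMem hk']
    rw [Finset.sum_insert hk']
    ring
  rw [h1, h2, compl_sum_pow y T 2, compl_sum_pow y T 3, compl_sum y hy T, e2, e3]
  ring
end

theorem swap1 (a : Fin N → ℝ) :
    ∑ S ∈ powersetCard m (univ : Finset (Fin N)), (∑ i ∈ S, a i)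
      = ∑ i, a i * (((powersetCard m (univ : Finset (Fin N))).filter
          (fun S => insert i (∅ : Finset (Fin N)) ⊆ S)).card : ℝ) := by
  have h1 : ∀ i : Fin N, (((powersetCard m (univ : Finset (Fin N))).filter
      (fun S => insert i (∅ : Finset (Fin N)) ⊆ S)).card : ℝ)
      = ∑ S ∈ powersetCard m (univ : Finset (Fin N)), if i ∈ S then (1:ℝ) else 0 := by
    intro i
    rw [Finset.sum_boole]
    congr 2
    apply Finset.filter_congr
    intro S _
    simp
  simp only [h1, Finset.mul_sum]
  rw [Finset.sum_comm]
  apply Finset.sum_congr rfl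
  intro S _
  rw [ite_mem_sum S a]
  apply Finset.sum_congr rfl
  intro i _
  by_cases h : i ∈ S <;> simp [h]

theorem swap2 (a b : Fin N → ℝ) :
    ∑ S ∈ powersetCard m (univ : Finset (Fin N)), (∑ i ∈ S, a i) * (∑ i ∈ S, b i)
      = ∑ i, a i * ∑ j, b j * (((powersetCard m (univ : Finset (Fin N))).filter
          (fun S => insert j (insert i (∅ : Finset (Fin N))) ⊆ S)).card : ℝ) := by
  have h1 : ∀ i j : Fin N, (((powersetCard m (univ : Finset (Fin N))).filter
      (fun S => insert j (insert i (∅ : Finset (Fin N))) ⊆ S)).card : ℝ)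
      = ∑ S ∈ powersetCard m (univ : Finset (Fin N)),
          if j ∈ S ∧ i ∈ S then (1:ℝ) else 0 := by
    intro i j
    rw [Finset.sum_boole]
    congr 2
    apply Finset.filter_congr
    intro S _
    simp [Finset.insert_subset_iff]
  have key : ∀ S ∈ powersetCard m (univ : Finset (Fin N)),
      (∑ i ∈ S, a i) * (∑ i ∈ S, b i)
      = ∑ i, ∑ j, a i * (b j * if j ∈ S ∧ i ∈ S then (1:ℝ) else 0) := by
    intro S _
    rw [ite_mem_sum S a, ite_mem_sum S b, Finset.sum_mul_sum]
    apply Finset.sum_congr rfl; intro i _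
    apply Finset.sum_congr rfl; intro j _
    by_cases hi : i ∈ S <;> by_cases hj : j ∈ S <;> simp [hi, hj]
  rw [Finset.sum_congr rfl key]
  conv_rhs => simp only [h1, Finset.mul_sum]
  rw [Finset.sum_comm]
  exact Finset.sum_congr rfl fun i _ => Finset.sum_comm

noncomputable def wc (N m : ℕ) : ℕ → ℝ := fun s => (cnt N m s : ℝ)

theorem cardfilterR (N m : ℕ) (T : Finset (Fin N)) :
    (((powersetCard m (univ : Finset (Fin N))).filter (fun S => T ⊆ S)).card : ℝ)
      = wc N m T.card := by
  by_cases h : T.card ≤ m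
  · rw [count_supersets N m T h, wc, cnt, if_pos h]
  · rw [count_supersets_zero N m T (by omega)]
    simp [wc, cnt, h]

section
variable {N m : ℕ} (y : Fin N → ℝ)

theorem GQ : ∑ S ∈ powersetCard m (univ : Finset (Fin N)), (∑ i ∈ S, (y i) ^ 2)
    = (∑ i, (y i) ^ 2) * wc N m 1 := by
  rw [swap1 (fun i => (y i) ^ 2)]
  simp only [cardfilterR]
  have hpt : ∀ i ∈ (univ : Finset (Fin N)), (y i) ^ 2 * wc N m (insert i (∅:Finset (Fin N))).card
      = (y i) ^ 2 * wc N m 1 := by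
    intro i _
    simp
  rw [Finset.sum_congr rfl hpt, ← Finset.sum_mul]

theorem GL2 (hy : ∑ i, y i = 0) :
    ∑ S ∈ powersetCard m (univ : Finset (Fin N)), (∑ i ∈ S, y i) * (∑ i ∈ S, y i)
      = (∑ i, (y i) ^ 2) * (wc N m 1 - wc N m 2) := by
  rw [swap2 y y]
  simp only [cardfilterR]
  simp only [L1 y (wc N m) hy]
  have hpt : ∀ i ∈ (univ : Finset (Fin N)), y i * e1 y (wc N m) (insert i ∅)
      = (y i) ^ 2 * (wc N m 1 - wc N m 2) := by
    intro i _
    simp only [e1, Finset.insert_empty, Finset.card_singleton, Finset.sum_singleton]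
    ring
  rw [Finset.sum_congr rfl hpt, ← Finset.sum_mul]

theorem GQ2 : ∑ S ∈ powersetCard m (univ : Finset (Fin N)),
      (∑ i ∈ S, (y i) ^ 2) * (∑ i ∈ S, (y i) ^ 2)
    = (∑ i, (y i) ^ 4) * wc N m 1 + ((∑ i, (y i) ^ 2) ^ 2 - ∑ i, (y i) ^ 4) * wc N m 2 := by
  rw [swap2 (fun i => (y i) ^ 2) (fun i => (y i) ^ 2)]
  simp only [cardfilterR]
  have hin : ∀ i : Fin N, ∑ j, (y j) ^ 2 * wc N m ((insert j (insert i (∅:Finset (Fin N)))).card)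
      = (y i) ^ 2 * wc N m 1 + ((∑ l, (y l) ^ 2) - (y i) ^ 2) * wc N m 2 := by
    intro i
    rw [L1sq y (wc N m) (insert i ∅)]
    simp
  simp only [hin]
  have hpt : ∀ i ∈ (univ : Finset (Fin N)),
      (y i) ^ 2 * ((y i) ^ 2 * wc N m 1 + ((∑ l, (y l) ^ 2) - (y i) ^ 2) * wc N m 2)
      = (wc N m 1 - wc N m 2) * (y i) ^ 4 + (wc N m 2 * (∑ l, (y l) ^ 2)) * (y i) ^ 2 := by
    intro i _; ring
  rw [Finset.sum_congr rfl hpt, Finset.sum_add_distrib, ← Finset.mul_sum, ← Finset.mul_sum]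
  ring

theorem GQL2 (hy : ∑ i, y i = 0) :
    ∑ S ∈ powersetCard m (univ : Finset (Fin N)),
      (∑ i ∈ S, (y i) ^ 2) * (∑ i ∈ S, y i) * (∑ i ∈ S, y i)
    = (∑ i, (y i) ^ 2) ^ 2 * (wc N m 2 - wc N m 3)
      + (∑ i, (y i) ^ 4) * (wc N m 1 - 3 * wc N m 2 + 2 * wc N m 3) := by
  rw [swap3 (fun i => (y i) ^ 2) y y]
  simp only [cardfilterR]
  simp only [L1 y (wc N m) hy]
  simp only [L2 y (wc N m) hy]
  have hpt : ∀ i ∈ (univ : Finset (Fin N)), (y i) ^ 2 * e2 y (wc N m) (insert i ∅)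
      = (wc N m 1 - 3 * wc N m 2 + 2 * wc N m 3) * (y i) ^ 4
        + ((wc N m 2 - wc N m 3) * (∑ l, (y l) ^ 2)) * (y i) ^ 2 := by
    intro i _
    simp only [e2, Finset.insert_empty, Finset.card_singleton, Finset.sum_singleton]
    ring
  rw [Finset.sum_congr rfl hpt, Finset.sum_add_distrib, ← Finset.mul_sum, ← Finset.mul_sum]
  ring

theorem GL4 (hy : ∑ i, y i = 0) :
    ∑ S ∈ powersetCard m (univ : Finset (Fin N)),
      (∑ i ∈ S, y i) * (∑ i ∈ S, y i) * (∑ i ∈ S, y i) * (∑ i ∈ S, y i)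
    = 3 * (wc N m 2 - 2 * wc N m 3 + wc N m 4) * (∑ i, (y i) ^ 2) ^ 2
      + (wc N m 1 - 7 * wc N m 2 + 12 * wc N m 3 - 6 * wc N m 4) * (∑ i, (y i) ^ 4) := by
  rw [swap4 y y y y]
  simp only [cardfilterR]
  simp only [L1 y (wc N m) hy]
  simp only [L2 y (wc N m) hy]
  simp only [L3 y (wc N m) hy]
  have hpt : ∀ i ∈ (univ : Finset (Fin N)), y i * e3 y (wc N m) (insert i ∅)
      = (wc N m 1 - 7 * wc N m 2 + 12 * wc N m 3 - 6 * wc N m 4 + 6 * wc N m 3 - 6 * wc N m 4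
          + 6 * wc N m 4 - 6 * wc N m 3) * (y i) ^ 4
        + (3 * (∑ l, (y l) ^ 2) * (wc N m 2 - 2 * wc N m 3 + wc N m 4)) * (y i) ^ 2
        + ((∑ l, (y l) ^ 3) * (wc N m 2 - 3 * wc N m 3 + 2 * wc N m 4)) * (y i) := by
    intro i _
    simp only [e3, Finset.insert_empty, Finset.card_singleton, Finset.sum_singleton]
    ring
  rw [Finset.sum_congr rfl hpt, Finset.sum_add_distrib, Finset.sum_add_distrib,
    ← Finset.mul_sum, ← Finset.mul_sum, ← Finset.mul_sum, hy]
  ring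
end

theorem endgame (Nr mr K w1 w2 w3 w4 p2 p4 : ℝ)
    (hN : 3 < Nr) (hm : 2 ≤ mr) (hK : 0 < K)
    (r1 : w1 * Nr = K * mr)
    (r2 : w2 * (Nr * (Nr - 1)) = K * (mr * (mr - 1)))
    (r3 : w3 * (Nr * (Nr - 1) * (Nr - 2)) = K * (mr * (mr - 1) * (mr - 2)))
    (r4 : w4 * (Nr * (Nr - 1) * (Nr - 2) * (Nr - 3)) = K * (mr * (mr - 1) * (mr - 2) * (mr - 3))) :
    ((mr ^ 2 * (p4 * w1 + (p2 ^ 2 - p4) * w2)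
        - 2 * mr * (p2 ^ 2 * (w2 - w3) + p4 * (w1 - 3 * w2 + 2 * w3))
        + (3 * (w2 - 2 * w3 + w4) * p2 ^ 2 + (w1 - 7 * w2 + 12 * w3 - 6 * w4) * p4)
      - (((mr - 1) * w1 + w2) * p2) ^ 2 / K) / mr ^ 4) / K
    = (mr - 1) * Nr * (Nr - mr) / (mr ^ 3 * (Nr - 1) ^ 2 * (Nr - 2) * (Nr - 3))
      * ((mr * Nr - Nr - mr - 1) * (Nr - 1) * (p4 / Nr)
        - (mr * Nr ^ 2 - 3 * Nr ^ 2 + 6 * Nr - 3 * mr - 3) * (p2 / Nr) ^ 2) := by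
  have hN0 : Nr ≠ 0 := by linarith
  have hN1 : Nr - 1 ≠ 0 := by intro h; nlinarith
  have hN2 : Nr - 2 ≠ 0 := by intro h; nlinarith
  have hN3 : Nr - 3 ≠ 0 := by intro h; nlinarith
  have hm0 : mr ≠ 0 := by linarith
  have hK0 : K ≠ 0 := ne_of_gt hK
  have hw1 : w1 = K * mr / Nr := by rw [eq_div_iff hN0]; exact r1
  have hw2 : w2 = K * (mr * (mr - 1)) / (Nr * (Nr - 1)) := by
    rw [eq_div_iff (by simp [hN0, hN1] : Nr * (Nr - 1) ≠ 0)]; exact r2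
  have hw3 : w3 = K * (mr * (mr - 1) * (mr - 2)) / (Nr * (Nr - 1) * (Nr - 2)) := by
    rw [eq_div_iff (by simp [hN0, hN1, hN2] : Nr * (Nr - 1) * (Nr - 2) ≠ 0)]; exact r3
  have hw4 : w4 = K * (mr * (mr - 1) * (mr - 2) * (mr - 3))
      / (Nr * (Nr - 1) * (Nr - 2) * (Nr - 3)) := by
    rw [eq_div_iff (by simp [hN0, hN1, hN2, hN3] : Nr * (Nr - 1) * (Nr - 2) * (Nr - 3) ≠ 0)]
    exact r4
  subst hw1 hw2 hw3 hw4
  field_simp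
  ring
theorem key_thm (N m : ℕ) (h1 : 2 ≤ m) (h2 : m ≤ N) (h3 : 3 < N) (y : Fin N → ℝ)
    (hy : ∑ i, y i = 0) :
    (∑ S ∈ Finset.powersetCard m (Finset.univ : Finset (Fin N)),
        ((∑ i ∈ S, (y i - (∑ j ∈ S, y j) / (m : ℝ)) ^ 2) / (m : ℝ)
          - (∑ T ∈ Finset.powersetCard m (Finset.univ : Finset (Fin N)),
              (∑ i ∈ T, (y i - (∑ j ∈ T, y j) / (m : ℝ)) ^ 2) / (m : ℝ))
            / ((Finset.powersetCard m (Finset.univ : Finset (Fin N))).card : ℝ)) ^ 2)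
      / ((Finset.powersetCard m (Finset.univ : Finset (Fin N))).card : ℝ)
    = (((m : ℝ) - 1) * (N : ℝ) * ((N : ℝ) - m))
        / ((m : ℝ) ^ 3 * ((N : ℝ) - 1) ^ 2 * ((N : ℝ) - 2) * ((N : ℝ) - 3))
      * (((m : ℝ) * N - N - m - 1) * ((N : ℝ) - 1) * ((∑ i, (y i) ^ 4) / (N : ℝ))
        - ((m : ℝ) * (N : ℝ) ^ 2 - 3 * (N : ℝ) ^ 2 + 6 * N - 3 * m - 3)
            * ((∑ i, (y i) ^ 2) / (N : ℝ)) ^ 2) := by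
  have hm0 : (m : ℝ) ≠ 0 := by
    have : (0:ℝ) < m := by exact_mod_cast (by omega : 0 < m)
    linarith
  have hKn : ((powersetCard m (univ : Finset (Fin N))).card : ℝ) = (N.choose m : ℝ) := by
    rw [Finset.card_powersetCard, Finset.card_univ, Fintype.card_fin]
  have hKpos : (0:ℝ) < ((powersetCard m (univ : Finset (Fin N))).card : ℝ) := by
    rw [hKn]
    exact_mod_cast Nat.choose_pos h2
  have hK0 : ((powersetCard m (univ : Finset (Fin N))).card : ℝ) ≠ 0 := ne_of_gt hKpos
  have hC0 : ((N.choose m : ℕ) : ℝ) ≠ 0 := by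
    exact_mod_cast (Nat.choose_pos h2).ne'
  -- step 1: per-sample rewrite of M2
  have hM2 : ∀ S ∈ powersetCard m (univ : Finset (Fin N)),
      (∑ i ∈ S, (y i - (∑ j ∈ S, y j) / (m : ℝ)) ^ 2) / (m : ℝ)
      = ((m : ℝ) * (∑ i ∈ S, (y i) ^ 2) - (∑ i ∈ S, y i) * (∑ i ∈ S, y i)) / (m : ℝ) ^ 2 := by
    intro S hS
    have hcard : (S.card : ℝ) = (m : ℝ) := by
      rw [Finset.mem_powersetCard_univ] at hS
      exact_mod_cast hS
    have hexp : ∑ i ∈ S, (y i - (∑ j ∈ S, y j) / (m : ℝ)) ^ 2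
        = ∑ i ∈ S, ((y i) ^ 2 - (2 * (∑ j ∈ S, y j) / (m : ℝ)) * y i
            + ((∑ j ∈ S, y j) / (m : ℝ)) ^ 2) := by
      apply Finset.sum_congr rfl
      intro i _
      ring
    rw [hexp]
    rw [Finset.sum_add_distrib, Finset.sum_sub_distrib, ← Finset.mul_sum, Finset.sum_const,
      nsmul_eq_mul, hcard]
    field_simp
    ring
  have hTot : (∑ T ∈ powersetCard m (univ : Finset (Fin N)),
        (∑ i ∈ T, (y i - (∑ j ∈ T, y j) / (m : ℝ)) ^ 2) / (m : ℝ))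
      = (∑ T ∈ powersetCard m (univ : Finset (Fin N)),
        ((m : ℝ) * (∑ i ∈ T, (y i) ^ 2) - (∑ i ∈ T, y i) * (∑ i ∈ T, y i))) / (m : ℝ) ^ 2 := by
    rw [Finset.sum_div]
    exact Finset.sum_congr rfl hM2
  have houter : (∑ S ∈ Finset.powersetCard m (Finset.univ : Finset (Fin N)),
        ((∑ i ∈ S, (y i - (∑ j ∈ S, y j) / (m : ℝ)) ^ 2) / (m : ℝ)
          - (∑ T ∈ Finset.powersetCard m (Finset.univ : Finset (Fin N)),
              (∑ i ∈ T, (y i - (∑ j ∈ T, y j) / (m : ℝ)) ^ 2) / (m : ℝ))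
            / ((Finset.powersetCard m (Finset.univ : Finset (Fin N))).card : ℝ)) ^ 2)
      = ∑ S ∈ Finset.powersetCard m (Finset.univ : Finset (Fin N)),
        (((m : ℝ) * (∑ i ∈ S, (y i) ^ 2) - (∑ i ∈ S, y i) * (∑ i ∈ S, y i)) / (m : ℝ) ^ 2
          - ((∑ T ∈ powersetCard m (univ : Finset (Fin N)),
              ((m : ℝ) * (∑ i ∈ T, (y i) ^ 2) - (∑ i ∈ T, y i) * (∑ i ∈ T, y i))) / (m : ℝ) ^ 2)
            / ((Finset.powersetCard m (Finset.univ : Finset (Fin N))).card : ℝ)) ^ 2 := by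
    apply Finset.sum_congr rfl
    intro S hS
    rw [hM2 S hS, hTot]
  rw [houter]
  -- step 2: expand the variance sum
  have hvar : ∑ S ∈ Finset.powersetCard m (Finset.univ : Finset (Fin N)),
        (((m : ℝ) * (∑ i ∈ S, (y i) ^ 2) - (∑ i ∈ S, y i) * (∑ i ∈ S, y i)) / (m : ℝ) ^ 2
          - ((∑ T ∈ powersetCard m (univ : Finset (Fin N)),
              ((m : ℝ) * (∑ i ∈ T, (y i) ^ 2) - (∑ i ∈ T, y i) * (∑ i ∈ T, y i))) / (m : ℝ) ^ 2)
            / ((Finset.powersetCard m (Finset.univ : Finset (Fin N))).card : ℝ)) ^ 2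
      = ((∑ S ∈ powersetCard m (univ : Finset (Fin N)),
            ((m : ℝ) * (∑ i ∈ S, (y i) ^ 2) - (∑ i ∈ S, y i) * (∑ i ∈ S, y i)) ^ 2)
          - (∑ T ∈ powersetCard m (univ : Finset (Fin N)),
              ((m : ℝ) * (∑ i ∈ T, (y i) ^ 2) - (∑ i ∈ T, y i) * (∑ i ∈ T, y i))) ^ 2
            / ((powersetCard m (univ : Finset (Fin N))).card : ℝ)) / (m : ℝ) ^ 4 := by
    have hper : ∀ S ∈ powersetCard m (univ : Finset (Fin N)),
        (((m : ℝ) * (∑ i ∈ S, (y i) ^ 2) - (∑ i ∈ S, y i) * (∑ i ∈ S, y i)) / (m : ℝ) ^ 2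
          - ((∑ T ∈ powersetCard m (univ : Finset (Fin N)),
              ((m : ℝ) * (∑ i ∈ T, (y i) ^ 2) - (∑ i ∈ T, y i) * (∑ i ∈ T, y i))) / (m : ℝ) ^ 2)
            / ((Finset.powersetCard m (Finset.univ : Finset (Fin N))).card : ℝ)) ^ 2
        = ((m : ℝ) * (∑ i ∈ S, (y i) ^ 2) - (∑ i ∈ S, y i) * (∑ i ∈ S, y i)) ^ 2 / (m : ℝ) ^ 4
          - ((m : ℝ) * (∑ i ∈ S, (y i) ^ 2) - (∑ i ∈ S, y i) * (∑ i ∈ S, y i))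
            * (2 * (∑ T ∈ powersetCard m (univ : Finset (Fin N)),
              ((m : ℝ) * (∑ i ∈ T, (y i) ^ 2) - (∑ i ∈ T, y i) * (∑ i ∈ T, y i)))
              / (((powersetCard m (univ : Finset (Fin N))).card : ℝ) * (m : ℝ) ^ 4))
          + (∑ T ∈ powersetCard m (univ : Finset (Fin N)),
              ((m : ℝ) * (∑ i ∈ T, (y i) ^ 2) - (∑ i ∈ T, y i) * (∑ i ∈ T, y i))) ^ 2
            / (((powersetCard m (univ : Finset (Fin N))).card : ℝ) ^ 2 * (m : ℝ) ^ 4) := by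
      intro S _
      field_simp [hC0]
      ring
    rw [Finset.sum_congr rfl hper, Finset.sum_add_distrib, Finset.sum_sub_distrib,
      ← Finset.sum_div, ← Finset.sum_mul, Finset.sum_const, nsmul_eq_mul]
    field_simp [hC0]
    ring
  rw [hvar]
  -- step 3: moment computations
  have hA : ∑ T ∈ powersetCard m (univ : Finset (Fin N)),
      ((m : ℝ) * (∑ i ∈ T, (y i) ^ 2) - (∑ i ∈ T, y i) * (∑ i ∈ T, y i))
      = (m : ℝ) * ((∑ i, (y i) ^ 2) * wc N m 1)
        - (∑ i, (y i) ^ 2) * (wc N m 1 - wc N m 2) := by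
    rw [Finset.sum_sub_distrib, ← Finset.mul_sum, GQ, GL2 y hy]
  have hB : ∑ S ∈ powersetCard m (univ : Finset (Fin N)),
      ((m : ℝ) * (∑ i ∈ S, (y i) ^ 2) - (∑ i ∈ S, y i) * (∑ i ∈ S, y i)) ^ 2
      = (m : ℝ) ^ 2 * ((∑ i, (y i) ^ 4) * wc N m 1
            + ((∑ i, (y i) ^ 2) ^ 2 - ∑ i, (y i) ^ 4) * wc N m 2)
        - 2 * (m : ℝ) * ((∑ i, (y i) ^ 2) ^ 2 * (wc N m 2 - wc N m 3)
            + (∑ i, (y i) ^ 4) * (wc N m 1 - 3 * wc N m 2 + 2 * wc N m 3))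
        + (3 * (wc N m 2 - 2 * wc N m 3 + wc N m 4) * (∑ i, (y i) ^ 2) ^ 2
            + (wc N m 1 - 7 * wc N m 2 + 12 * wc N m 3 - 6 * wc N m 4) * (∑ i, (y i) ^ 4)) := by
    have hper : ∀ S ∈ powersetCard m (univ : Finset (Fin N)),
        ((m : ℝ) * (∑ i ∈ S, (y i) ^ 2) - (∑ i ∈ S, y i) * (∑ i ∈ S, y i)) ^ 2
        = (m : ℝ) ^ 2 * ((∑ i ∈ S, (y i) ^ 2) * (∑ i ∈ S, (y i) ^ 2))
          - 2 * (m : ℝ) * ((∑ i ∈ S, (y i) ^ 2) * (∑ i ∈ S, y i) * (∑ i ∈ S, y i))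
          + (∑ i ∈ S, y i) * (∑ i ∈ S, y i) * (∑ i ∈ S, y i) * (∑ i ∈ S, y i) := by
      intro S _
      ring
    rw [Finset.sum_congr rfl hper, Finset.sum_add_distrib, Finset.sum_sub_distrib,
      ← Finset.mul_sum, ← Finset.mul_sum, GQ2, GQL2 y hy, GL4 y hy]
  rw [hA, hB]
  -- step 4: ratio identities and endgame
  have hNr : (3:ℝ) < (N:ℝ) := by exact_mod_cast h3
  have hmr : (2:ℝ) ≤ (m:ℝ) := by exact_mod_cast h1
  have r1 : wc N m 1 * (N:ℝ) = ((powersetCard m (univ : Finset (Fin N))).card : ℝ) * (m:ℝ) := by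
    have h := cnt_ratio N m h2 1 (by omega)
    simp only [Finset.prod_range_succ, Finset.prod_range_zero] at h
    rw [hKn]
    simp only [wc]
    push_cast at h
    linear_combination h
  have r2 : wc N m 2 * ((N:ℝ) * ((N:ℝ) - 1))
      = ((powersetCard m (univ : Finset (Fin N))).card : ℝ) * ((m:ℝ) * ((m:ℝ) - 1)) := by
    have h := cnt_ratio N m h2 2 (by omega)
    simp only [Finset.prod_range_succ, Finset.prod_range_zero] at h
    rw [hKn]
    simp only [wc]
    push_cast at h
    linear_combination h
  have r3 : wc N m 3 * ((N:ℝ) * ((N:ℝ) - 1) * ((N:ℝ) - 2))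
      = ((powersetCard m (univ : Finset (Fin N))).card : ℝ)
        * ((m:ℝ) * ((m:ℝ) - 1) * ((m:ℝ) - 2)) := by
    have h := cnt_ratio N m h2 3 (by omega)
    simp only [Finset.prod_range_succ, Finset.prod_range_zero] at h
    rw [hKn]
    simp only [wc]
    push_cast at h
    linear_combination h
  have r4 : wc N m 4 * ((N:ℝ) * ((N:ℝ) - 1) * ((N:ℝ) - 2) * ((N:ℝ) - 3))
      = ((powersetCard m (univ : Finset (Fin N))).card : ℝ)
        * ((m:ℝ) * ((m:ℝ) - 1) * ((m:ℝ) - 2) * ((m:ℝ) - 3)) := by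
    have h := cnt_ratio N m h2 4 (by omega)
    simp only [Finset.prod_range_succ, Finset.prod_range_zero] at h
    rw [hKn]
    simp only [wc]
    push_cast at h
    linear_combination h
  have := endgame (N:ℝ) (m:ℝ) ((powersetCard m (univ : Finset (Fin N))).card : ℝ)
    (wc N m 1) (wc N m 2) (wc N m 3) (wc N m 4)
    (∑ i, (y i) ^ 2) (∑ i, (y i) ^ 4) hNr hmr hKpos r1 r2 r3 r4
  linear_combination this
theorem srs_second_central_moment_variance (N m : ℕ) (h1 : 2 ≤ m) (h2 : m ≤ N)
    (h3 : 3 < N) (x : Fin N → ℝ) :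
    (∑ S ∈ Finset.powersetCard m (Finset.univ : Finset (Fin N)),
        ((∑ i ∈ S, (x i - (∑ j ∈ S, x j) / (m : ℝ)) ^ 2) / (m : ℝ)
          - (∑ T ∈ Finset.powersetCard m (Finset.univ : Finset (Fin N)),
              (∑ i ∈ T, (x i - (∑ j ∈ T, x j) / (m : ℝ)) ^ 2) / (m : ℝ))
            / ((Finset.powersetCard m (Finset.univ : Finset (Fin N))).card : ℝ)) ^ 2)
      / ((Finset.powersetCard m (Finset.univ : Finset (Fin N))).card : ℝ)
    = (((m : ℝ) - 1) * (N : ℝ) * ((N : ℝ) - m))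
        / ((m : ℝ) ^ 3 * ((N : ℝ) - 1) ^ 2 * ((N : ℝ) - 2) * ((N : ℝ) - 3))
      * (((m : ℝ) * N - N - m - 1) * ((N : ℝ) - 1)
            * ((∑ i, (x i - (∑ j, x j) / (N : ℝ)) ^ 4) / (N : ℝ))
        - ((m : ℝ) * (N : ℝ) ^ 2 - 3 * (N : ℝ) ^ 2 + 6 * N - 3 * m - 3)
            * ((∑ i, (x i - (∑ j, x j) / (N : ℝ)) ^ 2) / (N : ℝ)) ^ 2) := by
  obtain ⟨y, hydef⟩ : ∃ y : Fin N → ℝ, y = fun i => x i - (∑ j, x j) / (N : ℝ) := ⟨_, rfl⟩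
  have hN0 : (N : ℝ) ≠ 0 := Nat.cast_ne_zero.mpr (by omega)
  have hm0 : (m : ℝ) ≠ 0 := Nat.cast_ne_zero.mpr (by omega)
  have hxy : ∀ i, x i - (∑ j, x j) / (N : ℝ) = y i := by
    intro i; rw [hydef]
  have hy : ∑ i, y i = 0 := by
    rw [hydef]
    rw [Finset.sum_sub_distrib, Finset.sum_const, Finset.card_univ, Fintype.card_fin,
      nsmul_eq_mul]
    field_simp
    ring
  have hS : ∀ S ∈ Finset.powersetCard m (Finset.univ : Finset (Fin N)),
      (∑ i ∈ S, (x i - (∑ j ∈ S, x j) / (m : ℝ)) ^ 2)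
        = (∑ i ∈ S, (y i - (∑ j ∈ S, y j) / (m : ℝ)) ^ 2) := by
    intro S hSm
    have hcard : (S.card : ℝ) = (m : ℝ) := by
      rw [Finset.mem_powersetCard_univ] at hSm
      exact_mod_cast hSm
    have hsum : ∑ j ∈ S, y j = (∑ j ∈ S, x j) - (m : ℝ) * ((∑ j, x j) / (N : ℝ)) := by
      rw [hydef]
      rw [Finset.sum_sub_distrib, Finset.sum_const, nsmul_eq_mul, hcard]
    apply Finset.sum_congr rfl
    intro i _
    rw [hsum, ← hxy i]
    field_simp
    ring
  have hTot : (∑ T ∈ Finset.powersetCard m (Finset.univ : Finset (Fin N)),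
        (∑ i ∈ T, (x i - (∑ j ∈ T, x j) / (m : ℝ)) ^ 2) / (m : ℝ))
      = (∑ T ∈ Finset.powersetCard m (Finset.univ : Finset (Fin N)),
        (∑ i ∈ T, (y i - (∑ j ∈ T, y j) / (m : ℝ)) ^ 2) / (m : ℝ)) :=
    Finset.sum_congr rfl fun T hT => by rw [hS T hT]
  have houter : (∑ S ∈ Finset.powersetCard m (Finset.univ : Finset (Fin N)),
        ((∑ i ∈ S, (x i - (∑ j ∈ S, x j) / (m : ℝ)) ^ 2) / (m : ℝ)
          - (∑ T ∈ Finset.powersetCard m (Finset.univ : Finset (Fin N)),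
              (∑ i ∈ T, (x i - (∑ j ∈ T, x j) / (m : ℝ)) ^ 2) / (m : ℝ))
            / ((Finset.powersetCard m (Finset.univ : Finset (Fin N))).card : ℝ)) ^ 2)
      = (∑ S ∈ Finset.powersetCard m (Finset.univ : Finset (Fin N)),
        ((∑ i ∈ S, (y i - (∑ j ∈ S, y j) / (m : ℝ)) ^ 2) / (m : ℝ)
          - (∑ T ∈ Finset.powersetCard m (Finset.univ : Finset (Fin N)),
              (∑ i ∈ T, (y i - (∑ j ∈ T, y j) / (m : ℝ)) ^ 2) / (m : ℝ))
            / ((Finset.powersetCard m (Finset.univ : Finset (Fin N))).card : ℝ)) ^ 2) :=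
    Finset.sum_congr rfl fun S hSm => by rw [hS S hSm, hTot]
  rw [houter]
  simp only [hxy]
  exact key_thm N m h1 h2 h3 y hy
end
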